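/- arXiv:1005.3634 — 7 statements merged into one kernel-verified Lean document; each statement's English description precedes it below -/
import Mathlib

section
/- Let X be a Banach space and T : X → X a bounded linear operator. The following assertions are equivalent: (i) T is Li-Yorke chaotic; (ii) T admits a Li-Yorke pair, i.e. there exist x, y ∈ X with liminf_n ‖T^n x − T^n y‖ = 0 and limsup_n ‖T^n x − T^n y‖ > 0; (iii) T admits an irregular vector. -/
open Filter Topology
open scoped ENNReal

section Defs

variable {𝕜 : Type*} [RCLike 𝕜] {X : Type*} [NormedAddCommGroup X] [NormedSpace 𝕜 X]

/-- The upper density of a set of natural numbers. -/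
noncomputable def upperDensity (A : Set ℕ) : ℝ :=
  Filter.limsup (fun n : ℕ => ((A ∩ Set.Icc 1 n).ncard : ℝ) / n) Filter.atTop

/-- The lower density of a set of natural numbers. -/
noncomputable def lowerDensity (A : Set ℕ) : ℝ :=
  Filter.liminf (fun n : ℕ => ((A ∩ Set.Icc 1 n).ncard : ℝ) / n) Filter.atTop

/-- `{x, y}` is a Li-Yorke pair for `T`. -/
def IsLiYorkePair (T : X →L[𝕜] X) (x y : X) : Prop :=
  Filter.liminf (fun n : ℕ => (‖(T ^ n) x - (T ^ n) y‖₊ : ℝ≥0∞)) Filter.atTop = 0 ∧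
  0 < Filter.limsup (fun n : ℕ => (‖(T ^ n) x - (T ^ n) y‖₊ : ℝ≥0∞)) Filter.atTop

/-- `T` is Li-Yorke chaotic. -/
def LiYorkeChaotic (T : X →L[𝕜] X) : Prop :=
  ∃ Γ : Set X, ¬ Γ.Countable ∧ ∀ x ∈ Γ, ∀ y ∈ Γ, x ≠ y → IsLiYorkePair T x y

/-- `x` is an irregular vector for `T`. -/
def IrregularVector (T : X →L[𝕜] X) (x : X) : Prop :=
  Filter.liminf (fun n : ℕ => (‖(T ^ n) x‖₊ : ℝ≥0∞)) Filter.atTop = 0 ∧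
  Filter.limsup (fun n : ℕ => (‖(T ^ n) x‖₊ : ℝ≥0∞)) Filter.atTop = ⊤

/-- `x` is a distributionally irregular vector for `T`. -/
def DistIrregularVector (T : X →L[𝕜] X) (x : X) : Prop :=
  ∃ a b : ℕ → ℕ, StrictMono a ∧ StrictMono b ∧ (∀ k, 0 < a k) ∧ (∀ k, 0 < b k) ∧
    upperDensity (Set.range a) = 1 ∧ upperDensity (Set.range b) = 1 ∧
    Filter.Tendsto (fun k => ‖(T ^ (a k)) x‖) Filter.atTop (nhds 0) ∧
    Filter.Tendsto (fun k => ‖(T ^ (b k)) x‖) Filter.atTop Filter.atTop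

/-- `Γ` is a distributionally `ε`-scrambled set for `T`. -/
def DistScrambled (T : X →L[𝕜] X) (Γ : Set X) (ε : ℝ) : Prop :=
  ∀ x ∈ Γ, ∀ y ∈ Γ, x ≠ y →
    lowerDensity {n : ℕ | ‖(T ^ n) x - (T ^ n) y‖ < ε} = 0 ∧
    ∀ τ > (0:ℝ), upperDensity {n : ℕ | ‖(T ^ n) x - (T ^ n) y‖ < τ} = 1

/-- `T` is distributionally chaotic. -/
def DistChaotic (T : X →L[𝕜] X) : Prop :=
  ∃ Γ : Set X, ∃ ε > (0:ℝ), ¬ Γ.Countable ∧ DistScrambled T Γ ε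

/-- The Li-Yorke Chaos Criterion. -/
def LYChaosCriterion (T : X →L[𝕜] X) : Prop :=
  ∃ n : ℕ → ℕ, ∃ X₀ : Set X, StrictMono n ∧ (∀ k, 0 < n k) ∧
    (∀ x ∈ X₀, Filter.Tendsto (fun k : ℕ => (T ^ (n k)) x) Filter.atTop (nhds 0)) ∧
    ∀ C : ℝ, ∃ m : ℕ, ∃ y ∈ closure ((Submodule.span 𝕜 X₀ : Submodule 𝕜 X) : Set X),
      C * ‖y‖ < ‖(T ^ m) y‖

/-- The Strong Distributional Chaos Criterion with constant `r`. -/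
def SDCCriterion (T : X →L[𝕜] X) (r : ℝ) : Prop :=
  ∀ m : ℕ, ∃ x : X, x ≠ 0 ∧
    Filter.Tendsto (fun k : ℕ => ‖(T ^ k) x‖) Filter.atTop (nhds 0) ∧
    ∀ i : ℕ, 1 ≤ i → i ≤ m → r ^ i * ‖x‖ ≤ ‖(T ^ i) x‖

/-- The Distributional Chaos Criterion. -/
def DCCriterion (T : X →L[𝕜] X) : Prop :=
  ∃ x y : ℕ → X, ∃ N : ℕ → ℕ,
    (∀ m, x m ≠ 0) ∧ (∀ m, y m ≠ 0) ∧
    (∀ m, y m ∈ closure ((Submodule.span 𝕜 (Set.range x) : Submodule 𝕜 X) : Set X)) ∧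
    (∀ m, Filter.Tendsto (fun n : ℕ => (T ^ n) (x m)) Filter.atTop (nhds 0)) ∧
    (∀ m, 0 < N m) ∧ Monotone N ∧ Filter.Tendsto N Filter.atTop Filter.atTop ∧
    Filter.Tendsto
      (fun m : ℕ =>
        (({i : ℕ | i < N m ∧ (m : ℝ) * ‖y m‖ ≤ ‖(T ^ i) (y m)‖}).ncard : ℝ) / N m)
      Filter.atTop (nhds 1)

/-- `T` admits a dense irregular manifold. -/
def DenseIrregularManifold (T : X →L[𝕜] X) : Prop :=
  ∃ Y : Submodule 𝕜 X, Dense (Y : Set X) ∧ ∀ y ∈ Y, y ≠ 0 → IrregularVector T y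

/-- `T` admits a dense distributionally irregular manifold. -/
def DenseDistIrregularManifold (T : X →L[𝕜] X) : Prop :=
  ∃ Y : Submodule 𝕜 X, Dense (Y : Set X) ∧ ∀ y ∈ Y, y ≠ 0 → DistIrregularVector T y


/-- `S` is strictly singular: it is not bounded below on any infinite-dimensional subspace. -/
def StrictlySingular (S : X →L[𝕜] X) : Prop :=
  ∀ M : Submodule 𝕜 X, ¬ FiniteDimensional 𝕜 M →
    ¬ ∃ c : ℝ, 0 < c ∧ ∀ x ∈ M, c * ‖x‖ ≤ ‖S x‖

end Defs

section Helpers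
variable {X : Type*} [NormedAddCommGroup X]

lemma L1 {v : ℕ → X} (h : ∀ ε > (0:ℝ), ∃ᶠ n in atTop, ‖v n‖ < ε) :
    Filter.liminf (fun n : ℕ => (‖v n‖₊ : ℝ≥0∞)) Filter.atTop = 0 := by
  by_contra h'
  rw [← ne_eq, ← pos_iff_ne_zero] at h'
  obtain ⟨r, hr0, hrlt⟩ := ENNReal.lt_iff_exists_nnreal_btwn.mp h'
  have hr0' : (0:ℝ) < r := by exact_mod_cast hr0
  have := Filter.liminf_le_of_frequently_le' (x := (r : ℝ≥0∞))
    (u := fun n : ℕ => (‖v n‖₊ : ℝ≥0∞)) (f := atTop)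
    (((h r hr0').mono (fun n hn => ?_)))
  · exact absurd this (not_le.mpr hrlt)
  · show (‖v n‖₊ : ℝ≥0∞) ≤ (r : ℝ≥0∞)
    rw [← enorm_eq_nnnorm, ← ofReal_norm, ← ENNReal.ofReal_coe_nnreal]
    exact ENNReal.ofReal_le_ofReal hn.le

lemma L2 {v : ℕ → X} (h : ∀ M : ℝ, ∃ᶠ n in atTop, M < ‖v n‖) :
    Filter.limsup (fun n : ℕ => (‖v n‖₊ : ℝ≥0∞)) Filter.atTop = ⊤ := by
  by_contra h'
  obtain ⟨N, hN⟩ := ENNReal.exists_nat_gt h'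
  have := Filter.le_limsup_of_frequently_le' (x := (N : ℝ≥0∞))
    (u := fun n : ℕ => (‖v n‖₊ : ℝ≥0∞)) (f := atTop)
    (((h N).mono (fun n hn => ?_)))
  · exact absurd hN (not_lt.mpr this)
  · show ((N:ℕ) : ℝ≥0∞) ≤ (‖v n‖₊ : ℝ≥0∞)
    rw [← enorm_eq_nnnorm, ← ofReal_norm, ← ENNReal.ofReal_natCast]
    exact ENNReal.ofReal_le_ofReal hn.le

lemma L3 {v : ℕ → X} (h : Filter.liminf (fun n : ℕ => (‖v n‖₊ : ℝ≥0∞)) Filter.atTop = 0) :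
    ∀ ε > (0:ℝ), ∃ᶠ n in atTop, ‖v n‖ < ε := by
  intro ε hε
  have hlt : Filter.liminf (fun n : ℕ => (‖v n‖₊ : ℝ≥0∞)) Filter.atTop < ENNReal.ofReal ε := by
    rw [h]; exact ENNReal.ofReal_pos.mpr hε
  refine (Filter.frequently_lt_of_liminf_lt (by isBoundedDefault) hlt).mono (fun n hn => ?_)
  by_contra hc
  push_neg at hc
  rw [← enorm_eq_nnnorm, ← ofReal_norm] at hn
  exact absurd hn (not_lt.mpr (ENNReal.ofReal_le_ofReal hc))

lemma L4 {v : ℕ → X} (h : 0 < Filter.limsup (fun n : ℕ => (‖v n‖₊ : ℝ≥0∞)) Filter.atTop) :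
    ∃ β > (0:ℝ), ∃ᶠ n in atTop, β < ‖v n‖ := by
  obtain ⟨r, hr0, hrlt⟩ := ENNReal.lt_iff_exists_nnreal_btwn.mp h
  have hr0' : (0:ℝ) < r := by exact_mod_cast hr0
  refine ⟨r, hr0', (Filter.frequently_lt_of_lt_limsup (by isBoundedDefault) hrlt).mono
    (fun n hn => ?_)⟩
  by_contra hc
  push_neg at hc
  rw [← enorm_eq_nnnorm, ← ofReal_norm, ← ENNReal.ofReal_coe_nnreal] at hn
  exact absurd hn (not_lt.mpr (ENNReal.ofReal_le_ofReal hc))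

lemma L5 {v : ℕ → X} (h : Filter.limsup (fun n : ℕ => (‖v n‖₊ : ℝ≥0∞)) Filter.atTop = ⊤) :
    ∀ M : ℝ, ∃ᶠ n in atTop, M < ‖v n‖ := by
  intro M
  have hlt : ENNReal.ofReal M < Filter.limsup (fun n : ℕ => (‖v n‖₊ : ℝ≥0∞)) Filter.atTop := by
    rw [h]; exact ENNReal.ofReal_lt_top
  refine (Filter.frequently_lt_of_lt_limsup (by isBoundedDefault) hlt).mono (fun n hn => ?_)
  by_contra hc
  push_neg at hc
  rw [← enorm_eq_nnnorm, ← ofReal_norm] at hn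
  exact absurd hn (not_lt.mpr (ENNReal.ofReal_le_ofReal hc))

lemma L6 {v : ℕ → X} (h : ∃ c > (0:ℝ), ∃ᶠ n in atTop, c ≤ ‖v n‖) :
    0 < Filter.limsup (fun n : ℕ => (‖v n‖₊ : ℝ≥0∞)) Filter.atTop := by
  obtain ⟨c, hc0, hfreq⟩ := h
  have := Filter.le_limsup_of_frequently_le' (x := ENNReal.ofReal c)
    (u := fun n : ℕ => (‖v n‖₊ : ℝ≥0∞)) (f := atTop)
    (hfreq.mono (fun n hn => by
      show ENNReal.ofReal c ≤ (‖v n‖₊ : ℝ≥0∞)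
      rw [← enorm_eq_nnnorm, ← ofReal_norm]; exact ENNReal.ofReal_le_ofReal hn))
  exact lt_of_lt_of_le (ENNReal.ofReal_pos.mpr hc0) this

end Helpers

section Core
variable {𝕜 : Type*} [RCLike 𝕜] {X : Type*} [NormedAddCommGroup X] [NormedSpace 𝕜 X]

lemma bound_on_span (T : X →L[𝕜] X) (z : X) {v : X}
    (hv : v ∈ Submodule.span 𝕜 (Set.range fun i : ℕ => (T ^ i) z)) :
    ∃ C : ℝ, 0 ≤ C ∧ ∀ n : ℕ, ‖(T ^ n) v‖ ≤ C * ‖(T ^ n) z‖ := by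
  induction hv using Submodule.span_induction with
  | mem x hx =>
      obtain ⟨i, rfl⟩ := hx
      refine ⟨‖(T ^ i : X →L[𝕜] X)‖, norm_nonneg _, fun n => ?_⟩
      have : (T ^ n) ((T ^ i) z) = (T ^ i) ((T ^ n) z) := by
        rw [← ContinuousLinearMap.mul_apply, ← ContinuousLinearMap.mul_apply,
          ← pow_add, ← pow_add, Nat.add_comm]
      rw [this]
      exact (T ^ i).le_opNorm _
  | zero => exact ⟨0, le_refl _, fun n => by simp⟩
  | add x y hx hy ihx ihy =>
      obtain ⟨C1, hC1, h1⟩ := ihx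
      obtain ⟨C2, hC2, h2⟩ := ihy
      refine ⟨C1 + C2, by linarith, fun n => ?_⟩
      calc ‖(T ^ n) (x + y)‖ ≤ ‖(T ^ n) x‖ + ‖(T ^ n) y‖ := by
              rw [map_add]; exact norm_add_le _ _
        _ ≤ C1 * ‖(T ^ n) z‖ + C2 * ‖(T ^ n) z‖ := add_le_add (h1 n) (h2 n)
        _ = (C1 + C2) * ‖(T ^ n) z‖ := by ring
  | smul a x hx ih =>
      obtain ⟨C, hC, h1⟩ := ih
      refine ⟨‖a‖ * C, mul_nonneg (norm_nonneg _) hC, fun n => ?_⟩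
      rw [map_smul, norm_smul, mul_assoc]
      exact mul_le_mul_of_nonneg_left (h1 n) (norm_nonneg _)


private lemma ceil_bound1 (ε : ℝ) (hε : 0 < ε) (K : ℕ) :
    1 / (((max K ⌈1/ε⌉₊ : ℕ) : ℝ) + 1) ≤ ε := by
  have h1 : (1:ℝ)/ε ≤ ⌈1/ε⌉₊ := Nat.le_ceil _
  have h2 : (⌈1/ε⌉₊ : ℝ) ≤ (max K ⌈1/ε⌉₊ : ℕ) := Nat.cast_le.mpr (le_max_right K _)
  have h3 : (1:ℝ) ≤ (max K ⌈1/ε⌉₊ : ℕ) * ε := (div_le_iff₀ hε).mp (h1.trans h2)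
  rw [div_le_iff₀ (by positivity)]
  nlinarith

private lemma ceil_bound2 (M : ℝ) (K : ℕ) : M ≤ ((K + ⌈|M|⌉₊ + 1 : ℕ) : ℝ) := by
  have h1 : M ≤ |M| := le_abs_self M
  have h2 : |M| ≤ ⌈|M|⌉₊ := Nat.le_ceil _
  have h3 : (⌈|M|⌉₊ : ℝ) ≤ ((K + ⌈|M|⌉₊ + 1 : ℕ) : ℝ) := by
    push_cast; linarith [Nat.cast_nonneg (α := ℝ) K]
  linarith

lemma exists_irregular_aux [CompleteSpace X] (T : X →L[𝕜] X) (z : X)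
    (h0 : ∀ ε > (0:ℝ), ∃ᶠ n in atTop, ‖(T ^ n) z‖ < ε)
    (hb : ∃ β > (0:ℝ), ∃ᶠ n in atTop, β < ‖(T ^ n) z‖) :
    ∃ w : X, (∀ ε > (0:ℝ), ∃ᶠ n in atTop, ‖(T ^ n) w‖ < ε) ∧
      ∀ M : ℝ, ∃ᶠ n in atTop, M < ‖(T ^ n) w‖ := by
  obtain ⟨β, hβ0, hβ⟩ := hb
  set p : Submodule 𝕜 X := Submodule.span 𝕜 (Set.range fun i : ℕ => (T ^ i) z) with hp
  set Y : Submodule 𝕜 X := p.topologicalClosure with hY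
  haveI : CompleteSpace ↥(Y : Set X) := p.isClosed_topologicalClosure.completeSpace_coe
  haveI : Nonempty ↥(Y : Set X) := ⟨⟨0, Y.zero_mem⟩⟩
  -- continuity of evaluation maps
  have hcont : ∀ n : ℕ, Continuous (fun w : ↥(Y : Set X) => ‖(T ^ n) (w : X)‖) := fun n =>
    ((T ^ n).continuous.comp continuous_subtype_val).norm
  -- the open sets
  set U : ℕ → Set ↥(Y : Set X) :=
    fun k => {w | ∃ n ≥ k, ‖(T ^ n) (w : X)‖ < 1 / (k + 1)} with hU
  set V : ℕ → Set ↥(Y : Set X) :=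
    fun k => {w | ∃ n ≥ k, (k : ℝ) < ‖(T ^ n) (w : X)‖} with hV
  have hUopen : ∀ k, IsOpen (U k) := by
    intro k
    have : U k = ⋃ n, ⋃ (_ : n ≥ k), {w : ↥(Y : Set X) | ‖(T ^ n) (w : X)‖ < 1 / (k + 1)} := by
      ext w; simp [hU]
    rw [this]
    exact isOpen_iUnion fun n => isOpen_iUnion fun _ => isOpen_lt (hcont n) continuous_const
  have hVopen : ∀ k, IsOpen (V k) := by
    intro k
    have : V k = ⋃ n, ⋃ (_ : n ≥ k), {w : ↥(Y : Set X) | (k : ℝ) < ‖(T ^ n) (w : X)‖} := by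
      ext w; simp [hV]
    rw [this]
    exact isOpen_iUnion fun n => isOpen_iUnion fun _ => isOpen_lt continuous_const (hcont n)
  -- density of U k
  have hUdense : ∀ k, Dense (U k) := by
    intro k
    rw [Metric.dense_iff]
    intro w0 r hr
    have hw0 : (w0 : X) ∈ closure (p : Set X) := w0.2
    obtain ⟨v, hvp, hdist⟩ := Metric.mem_closure_iff.mp hw0 r hr
    obtain ⟨C, hC0, hCb⟩ := bound_on_span T z hvp
    have hεpos : (0:ℝ) < (1 / (k + 1)) / (C + 1) := by positivity
    obtain ⟨n, hnk, hn⟩ := Filter.frequently_atTop.mp (h0 _ hεpos) k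
    refine ⟨⟨v, Submodule.le_topologicalClosure p hvp⟩, ?_, n, hnk, ?_⟩
    · rw [Metric.mem_ball, Subtype.dist_eq, dist_comm]
      exact hdist
    · have h1 : ‖(T ^ n) v‖ ≤ C * ‖(T ^ n) z‖ := hCb n
      have h2 : C * ‖(T ^ n) z‖ < 1 / ((k:ℝ) + 1) := by
        have hk1 : (0:ℝ) < 1 / ((k:ℝ) + 1) := by positivity
        calc C * ‖(T ^ n) z‖ ≤ C * (1 / ((k:ℝ) + 1) / (C + 1)) :=
              mul_le_mul_of_nonneg_left hn.le hC0
          _ < (C + 1) * (1 / ((k:ℝ) + 1) / (C + 1)) := by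
              have : (0:ℝ) < 1 / ((k:ℝ) + 1) / (C + 1) := by positivity
              nlinarith
          _ = 1 / ((k:ℝ) + 1) := by field_simp
      linarith
  -- density of V k
  have hVdense : ∀ k, Dense (V k) := by
    intro k
    rw [Metric.dense_iff]
    intro w0 r hr
    by_cases hcase : ∃ n ≥ k, (k : ℝ) < ‖(T ^ n) (w0 : X)‖
    · exact ⟨w0, Metric.mem_ball_self hr, hcase⟩
    push_neg at hcase
    -- find u in span with small norm but a large iterate
    set δ : ℝ := (r * β) / (4 * (k + 1)) with hδ
    have hδpos : 0 < δ := by positivity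
    obtain ⟨n, hn⟩ := (h0 δ hδpos).exists
    obtain ⟨m, hmk, hm⟩ := Filter.frequently_atTop.mp hβ (n + k)
    set u : X := (T ^ n) z with hu
    set d : ℕ := m - n with hd
    have hdk : k ≤ d := by omega
    have hdu : (T ^ d) u = (T ^ m) z := by
      rw [hu, ← ContinuousLinearMap.mul_apply, ← pow_add]
      congr 2
      omega
    have hdub : β < ‖(T ^ d) u‖ := by rw [hdu]; exact hm
    have hune : u ≠ 0 := by
      intro h
      rw [h, map_zero, norm_zero] at hdub
      linarith
    have hupos : 0 < ‖u‖ := norm_pos_iff.mpr hune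
    have huδ : ‖u‖ < δ := hn
    set c : ℝ := r / (2 * ‖u‖) with hc
    have hcpos : 0 < c := by positivity
    set a : 𝕜 := algebraMap ℝ 𝕜 c with ha
    have hna : ‖a‖ = c := by rw [ha, norm_algebraMap']; exact abs_of_pos hcpos
    have hup : u ∈ Y := Submodule.le_topologicalClosure p (Submodule.subset_span ⟨n, rfl⟩)
    have hvY : (w0 : X) + a • u ∈ Y := Y.add_mem w0.2 (Y.smul_mem a hup)
    refine ⟨⟨(w0 : X) + a • u, hvY⟩, ?_, d, hdk, ?_⟩
    · rw [Metric.mem_ball, Subtype.dist_eq, dist_comm]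
      show dist ((w0 : X)) ((w0 : X) + a • u) < r
      rw [dist_eq_norm]
      have : (w0 : X) - ((w0 : X) + a • u) = -(a • u) := by abel
      rw [this, norm_neg, norm_smul, hna, hc]
      rw [div_mul_eq_mul_div, mul_comm]
      rw [div_lt_iff₀ (by positivity)]
      nlinarith
    · show (k : ℝ) < ‖(T ^ d) ((w0 : X) + a • u)‖
      have hmapadd : (T ^ d) ((w0 : X) + a • u) = (T ^ d) (w0 : X) + a • (T ^ d) u := by
        rw [map_add, map_smul]
      have hAB : (T ^ d) ((w0 : X) + a • u) - (T ^ d) (w0 : X) = a • (T ^ d) u := by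
        rw [← map_sub, add_sub_cancel_left, map_smul]
      have htri : ‖a • (T ^ d) u‖ ≤ ‖(T ^ d) ((w0 : X) + a • u)‖ + ‖(T ^ d) (w0 : X)‖ :=
        hAB ▸ norm_sub_le _ _
      have hw0d : ‖(T ^ d) (w0 : X)‖ ≤ k := hcase d hdk
      have hbig : (2 : ℝ) * k + 2 < ‖a • (T ^ d) u‖ := by
        rw [norm_smul, hna]
        have h1 : c * β > 2 * ((k:ℝ) + 1) := by
          rw [hc, div_mul_eq_mul_div, gt_iff_lt, lt_div_iff₀ (by positivity)]
          have e1 : 4 * ((k:ℝ)+1) * ‖u‖ < 4 * ((k:ℝ)+1) * δ := by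
            have : (0:ℝ) < 4 * ((k:ℝ)+1) := by positivity
            nlinarith
          have e2 : 4 * ((k:ℝ)+1) * δ = r * β := by rw [hδ]; field_simp
          nlinarith
        nlinarith
      linarith
  -- Baire
  have hGopen : ∀ k, IsOpen (U k ∩ V k) := fun k => (hUopen k).inter (hVopen k)
  have hGdense : ∀ k, Dense (U k ∩ V k) := fun k =>
    (hUdense k).inter_of_isOpen_left (hVdense k) (hUopen k)
  have hD : Dense (⋂ k, U k ∩ V k) := dense_iInter_of_isOpen hGopen hGdense
  obtain ⟨w, hw⟩ := hD.nonempty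
  simp only [Set.mem_iInter, Set.mem_inter_iff, hU, hV, Set.mem_setOf_eq] at hw
  have hw1 : ∀ k : ℕ, ∃ n ≥ k, ‖(T ^ n) (w : X)‖ < 1 / ((k:ℝ) + 1) := fun k => (hw k).1
  have hw2 : ∀ k : ℕ, ∃ n ≥ k, (k : ℝ) < ‖(T ^ n) (w : X)‖ := fun k => (hw k).2
  clear hw
  refine ⟨(w : X), ?_, ?_⟩
  · intro ε hε
    rw [Filter.frequently_atTop]
    intro K
    obtain ⟨n, hnk, hn⟩ := hw1 (max K ⌈1/ε⌉₊)
    exact ⟨n, le_trans (le_max_left _ _) hnk, lt_of_lt_of_le hn (ceil_bound1 ε hε K)⟩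
  · intro M
    rw [Filter.frequently_atTop]
    intro K
    obtain ⟨n, hnk, hn⟩ := hw2 (K + ⌈|M|⌉₊ + 1)
    exact ⟨n, by omega, lt_of_le_of_lt (ceil_bound2 M K) hn⟩

end Core


section Wrappers
variable {𝕜 : Type*} [RCLike 𝕜] {X : Type*} [NormedAddCommGroup X] [NormedSpace 𝕜 X]

lemma pair_to_irregular [CompleteSpace X] {T : X →L[𝕜] X}
    (h : ∃ x y : X, IsLiYorkePair T x y) : ∃ w : X, IrregularVector T w := by
  obtain ⟨x, y, h1, h2⟩ := h
  have key : ∀ n : ℕ, (T ^ n) x - (T ^ n) y = (T ^ n) (x - y) := fun n => (map_sub _ _ _).symm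
  simp only [key] at h1 h2
  obtain ⟨w, hw1, hw2⟩ := exists_irregular_aux T (x - y) (L3 h1) (L4 h2)
  exact ⟨w, L1 hw1, L2 hw2⟩

lemma irregular_to_chaotic {T : X →L[𝕜] X}
    (h : ∃ w : X, IrregularVector T w) : LiYorkeChaotic T := by
  obtain ⟨w, hli, hls⟩ := h
  have hw0 : w ≠ 0 := by
    rintro rfl
    simp only [map_zero, nnnorm_zero, ENNReal.coe_zero, Filter.limsup_const] at hls
    exact ENNReal.zero_ne_top hls
  set f : ℝ → X := fun t => (algebraMap ℝ 𝕜 t) • w with hf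
  have hinj : Function.Injective f := by
    intro s t h
    have h' : (algebraMap ℝ 𝕜 s) • w = (algebraMap ℝ 𝕜 t) • w := h
    have hsub : (algebraMap ℝ 𝕜 s - algebraMap ℝ 𝕜 t) • w = 0 := by
      rw [sub_smul, h', sub_self]
    rcases smul_eq_zero.mp hsub with hc | hc
    · have : algebraMap ℝ 𝕜 s = algebraMap ℝ 𝕜 t := by
        have := sub_eq_zero.mp hc; exact this
      exact (algebraMap ℝ 𝕜).injective this
    · exact absurd hc hw0
  refine ⟨Set.range f, ?_, ?_⟩
  · intro hcnt
    have := hcnt.preimage hinj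
    rw [Set.preimage_range] at this
    exact Cardinal.not_countable_real this
  · rintro u ⟨s, rfl⟩ v ⟨t, rfl⟩ hne
    have hst : s ≠ t := fun h => hne (by rw [h])
    set a : 𝕜 := algebraMap ℝ 𝕜 (s - t) with ha
    have hna : ‖a‖ = |s - t| := norm_algebraMap' 𝕜 (s - t)
    have hapos : 0 < ‖a‖ := by rw [hna]; exact abs_pos.mpr (sub_ne_zero.mpr hst)
    have key : ∀ n : ℕ, (T ^ n) (f s) - (T ^ n) (f t) = a • ((T ^ n) w) := by
      intro n
      rw [hf]
      simp only [map_smul]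
      rw [← sub_smul, ha, map_sub]
    constructor
    · simp only [key]
      apply L1 (v := fun n => a • ((T ^ n) w))
      intro ε hε
      refine (L3 hli (ε / ‖a‖) (by positivity)).mono (fun n hn => ?_)
      show ‖a • ((T ^ n) w)‖ < ε
      rw [norm_smul]
      calc ‖a‖ * ‖(T ^ n) w‖ < ‖a‖ * (ε / ‖a‖) := by
            exact mul_lt_mul_of_pos_left hn hapos
        _ = ε := by field_simp
    · simp only [key]
      apply L6 (v := fun n => a • ((T ^ n) w))
      refine ⟨1, one_pos, (L5 hls (1 / ‖a‖)).mono (fun n hn => ?_)⟩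
      show (1:ℝ) ≤ ‖a • ((T ^ n) w)‖
      rw [norm_smul]
      calc (1:ℝ) = ‖a‖ * (1 / ‖a‖) := by field_simp
        _ ≤ ‖a‖ * ‖(T ^ n) w‖ := mul_le_mul_of_nonneg_left hn.le (norm_nonneg _)

lemma chaotic_to_pair {T : X →L[𝕜] X}
    (h : LiYorkeChaotic T) : ∃ x y : X, IsLiYorkePair T x y := by
  obtain ⟨Γ, hunc, hpairs⟩ := h
  have hnt : Γ.Nontrivial := by
    rw [← Set.not_subsingleton_iff]
    exact fun hs => hunc hs.countable
  obtain ⟨x, hx, y, hy, hne⟩ := hnt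
  exact ⟨x, y, hpairs x hx y hy hne⟩

end Wrappers


/-- Theorem 2.1: `T` is Li-Yorke chaotic iff it admits a Li-Yorke pair iff it admits an
irregular vector. -/
theorem liYorkeChaotic_iff_liYorkePair_iff_irregularVector
    {𝕜 : Type*} [RCLike 𝕜] {X : Type*} [NormedAddCommGroup X] [NormedSpace 𝕜 X]
    [CompleteSpace X] (T : X →L[𝕜] X) :
    (LiYorkeChaotic T ↔ ∃ x y : X, IsLiYorkePair T x y) ∧
    (LiYorkeChaotic T ↔ ∃ x : X, IrregularVector T x) := by
  refine ⟨⟨chaotic_to_pair, fun h => irregular_to_chaotic (pair_to_irregular h)⟩,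
    ⟨fun h => pair_to_irregular (chaotic_to_pair h), irregular_to_chaotic⟩⟩
end

section
/- Let X be a complex Banach space and T : X → X a bounded linear operator. If T is Li-Yorke chaotic, then the spectrum of T intersects the unit circle, i.e. there exists λ ∈ σ(T) with |λ| = 1. -/
open Filter Topology
open scoped ENNReal

section Aux

open Filter Topology Metric
open scoped ENNReal

private lemma key_tendsto
    {X : Type*} [NormedAddCommGroup X] [NormedSpace ℂ X] [CompleteSpace X]
    (T : X →L[ℂ] X)
    (hspec : ∀ lam ∈ spectrum ℂ T, ‖lam‖ ≠ 1) (z : X)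
    (hz : Filter.liminf (fun n : ℕ => (‖(T ^ n) z‖₊ : ℝ≥0∞)) Filter.atTop = 0) :
    Filter.Tendsto (fun n : ℕ => ‖(T ^ n) z‖) Filter.atTop (nhds 0) := by
  -- the unit circle is in the resolvent set
  have hsub : sphere (0:ℂ) 1 ⊆ resolventSet ℂ T := by
    intro lam hl
    rw [mem_sphere_zero_iff_norm] at hl
    by_contra hmem
    exact hspec lam hmem (by simpa using hl)
  obtain ⟨δ, hδ, hth⟩ := (isCompact_sphere (0:ℂ) 1).exists_thickening_subset_open
    (spectrum.isOpen_resolventSet T) hsub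
  set d : ℝ := min δ 1 / 2 with hd
  have hd0 : 0 < d := by positivity
  have hdδ : d < δ := by
    have : min δ 1 ≤ δ := min_le_left _ _
    have h1 : d ≤ δ / 2 := by rw [hd]; linarith
    linarith
  have hd1 : d ≤ 1/2 := by
    have : min δ 1 ≤ 1 := min_le_right _ _
    rw [hd]; linarith
  set r : ℝ := 1 - d with hrdef
  set s : ℝ := 1 + d with hsdef
  have hr0 : 0 < r := by rw [hrdef]; linarith
  have hr1 : r < 1 := by rw [hrdef]; linarith
  have hs1 : 1 < s := by rw [hsdef]; linarith
  have hrs : r ≤ s := by rw [hrdef, hsdef]; linarith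
  -- the closed annulus is in the resolvent set
  set A : Set ℂ := closedBall (0:ℂ) s \ ball (0:ℂ) r with hAdef
  have hA : ∀ lam ∈ A, lam ∈ resolventSet ℂ T := by
    intro lam hl
    obtain ⟨h1, h2⟩ := hl
    rw [mem_closedBall_zero_iff] at h1
    rw [mem_ball_zero_iff, not_lt] at h2
    have hlam0 : lam ≠ 0 := by
      intro h0; rw [h0, norm_zero] at h2; linarith
    have ha0 : (0:ℝ) < ‖lam‖ := lt_of_lt_of_le hr0 h2
    refine hth (Metric.mem_thickening_iff.2 ⟨(‖lam‖ : ℂ)⁻¹ * lam, ?_, ?_⟩)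
    · rw [mem_sphere_zero_iff_norm, norm_mul, norm_inv]
      rw [Complex.norm_real, Real.norm_eq_abs, abs_of_pos ha0]
      exact inv_mul_cancel₀ (ne_of_gt ha0)
    · rw [dist_eq_norm]
      have e1 : lam - (‖lam‖ : ℂ)⁻¹ * lam = ((1 - ‖lam‖⁻¹ : ℝ) : ℂ) * lam := by
        push_cast; ring
      rw [e1, norm_mul, Complex.norm_real, Real.norm_eq_abs]
      have e2 : |1 - ‖lam‖⁻¹| * ‖lam‖ = |‖lam‖ - 1| := by
        calc |1 - ‖lam‖⁻¹| * ‖lam‖ = |(1 - ‖lam‖⁻¹) * ‖lam‖| := by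
              rw [abs_mul, abs_of_pos ha0]
          _ = |‖lam‖ - 1| := by rw [sub_mul, one_mul, inv_mul_cancel₀ (ne_of_gt ha0)]
      rw [e2]
      have : |‖lam‖ - 1| ≤ d := by
        rw [abs_le]
        constructor <;> simp only [hrdef, hsdef] at h1 h2 <;> linarith
      linarith
  have hAc : IsCompact A := (isCompact_closedBall (0:ℂ) s).diff isOpen_ball
  have hResCont : ContinuousOn (resolvent T) A := fun lam hl =>
    (spectrum.hasDerivAt_resolvent (hA lam hl)).differentiableAt.continuousAt.continuousWithinAt
  obtain ⟨M, hM⟩ := hAc.exists_bound_of_continuousOn hResCont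
  have h1A : (1:ℂ) ∈ A := by
    constructor
    · rw [mem_closedBall_zero_iff]; simp; linarith
    · rw [mem_ball_zero_iff]; simp; linarith
  have hM0 : 0 ≤ M := le_trans (norm_nonneg _) (hM 1 h1A)
  -- integrand facts
  have hAne : ∀ lam ∈ A, lam ≠ 0 := by
    intro lam hl h0
    have := hl.2
    rw [h0] at this
    exact this (mem_ball_self hr0)
  have hsphere : ∀ ρ : ℝ, r ≤ ρ → ρ ≤ s → sphere (0:ℂ) ρ ⊆ A := by
    intro ρ h1 h2 lam hl
    rw [mem_sphere_zero_iff_norm] at hl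
    constructor
    · rw [mem_closedBall_zero_iff]; linarith
    · rw [mem_ball_zero_iff]; push_neg; linarith
  have hdiff : ∀ (n : ℤ) (x : X) (lam : ℂ), lam ≠ 0 → lam ∈ resolventSet ℂ T →
      DifferentiableAt ℂ (fun mu : ℂ => mu ^ n • resolvent T mu x) lam := by
    intro n x lam h0 hres
    exact (differentiableAt_zpow.2 (Or.inl h0)).smul
      ((spectrum.hasDerivAt_resolvent hres).differentiableAt.clm_apply (differentiableAt_const x))
  have hcontA : ∀ (n : ℤ) (x : X),
      ContinuousOn (fun lam : ℂ => lam ^ n • resolvent T lam x) A := by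
    intro n x lam hl
    exact (hdiff n x lam (hAne lam hl) (hA lam hl)).continuousAt.continuousWithinAt
  have hint : ∀ (n : ℤ) (x : X) (ρ : ℝ), 0 < ρ → r ≤ ρ → ρ ≤ s →
      CircleIntegrable (fun lam : ℂ => lam ^ n • resolvent T lam x) 0 ρ := by
    intro n x ρ hρ h1 h2
    exact ((hcontA n x).mono (hsphere ρ h1 h2)).circleIntegrable hρ.le
  have hcontz : ∀ (n : ℤ), ContinuousOn (fun lam : ℂ => lam ^ n) A := by
    intro n lam hl
    exact (differentiableAt_zpow.2 (Or.inl (hAne lam hl))).continuousAt.continuousWithinAt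
  -- radius independence
  have hJs : ∀ (n : ℤ) (x : X),
      (∮ lam in C((0:ℂ), s), lam ^ n • resolvent T lam x)
        = ∮ lam in C((0:ℂ), r), lam ^ n • resolvent T lam x := by
    intro n x
    refine Complex.circleIntegral_eq_of_differentiable_on_annulus_off_countable hr0 hrs
      Set.countable_empty (hcontA n x) ?_
    intro lam hl
    have hlA : lam ∈ A := by
      refine ⟨ball_subset_closedBall hl.1.1, fun hb => hl.1.2 (ball_subset_closedBall hb)⟩
    exact hdiff n x lam (hAne lam hlA) (hA lam hlA)
  -- the recursion identity
  have hrec : ∀ (ρ : ℝ), 0 < ρ → r ≤ ρ → ρ ≤ s → ∀ (n : ℤ) (x : X),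
      (∮ lam in C((0:ℂ), ρ), lam ^ (n+1) • resolvent T lam x)
        = (∮ lam in C((0:ℂ), ρ), (lam ^ n : ℂ)) • x
          + ∮ lam in C((0:ℂ), ρ), lam ^ n • resolvent T lam (T x) := by
    intro ρ hρ h1 h2 n x
    have heq : Set.EqOn
        (fun lam : ℂ => lam ^ (n+1) • resolvent T lam x - lam ^ n • resolvent T lam (T x))
        (fun lam : ℂ => lam ^ n • x) (sphere 0 ρ) := by
      intro lam hl
      have hlA : lam ∈ A := hsphere ρ h1 h2 hl
      have hlρ : lam ∈ resolventSet ℂ T := hA lam hlA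
      have hl0 : lam ≠ 0 := hAne lam hlA
      have hres : lam • resolvent T lam x - T (resolvent T lam x) = x := by
        have h1' : (algebraMap ℂ (X →L[ℂ] X) lam - T) * resolvent T lam = 1 := by
          rw [spectrum.resolvent_eq hlρ]
          exact hlρ.unit.mul_inv
        have := congrArg (fun S : X →L[ℂ] X => S x) h1'
        simpa [ContinuousLinearMap.mul_apply, ContinuousLinearMap.sub_apply,
          Algebra.algebraMap_eq_smul_one] using this
      have hcomm : resolvent T lam (T x) = T (resolvent T lam x) := by
        have hc : Commute T (resolvent T lam) := by
          rw [spectrum.resolvent_eq hlρ]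
          exact (((Algebra.commute_algebraMap_left lam T).symm.sub_right
            (Commute.refl T))).units_inv_right
        have := congrArg (fun S : X →L[ℂ] X => S x) hc.symm
        simpa [ContinuousLinearMap.mul_apply] using this
      simp only
      apply sub_eq_of_eq_add
      rw [zpow_add_one₀ hl0, mul_smul, hcomm, ← smul_add]
      congr 1
      exact eq_add_of_sub_eq hres
    have hsub2 := circleIntegral.integral_sub (hint (n+1) x ρ hρ h1 h2) (hint n (T x) ρ hρ h1 h2)
    have h3 : (∮ lam in C((0:ℂ), ρ),
        (lam ^ (n+1) • resolvent T lam x - lam ^ n • resolvent T lam (T x)))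
        = (∮ lam in C((0:ℂ), ρ), (lam ^ n : ℂ)) • x := by
      rw [circleIntegral.integral_congr hρ.le heq, circleIntegral.integral_smul_const]
    exact eq_add_of_sub_eq (hsub2.symm.trans h3)
  -- values of the scalar integrals
  have hzero : ∀ (n : ℤ), n ≠ -1 → ∀ (ρ : ℝ), (∮ lam in C((0:ℂ), ρ), (lam ^ n : ℂ)) = 0 := by
    intro n hn ρ
    have := circleIntegral.integral_sub_zpow_of_ne hn 0 0 ρ
    simpa using this
  have htwo : ∀ (ρ : ℝ), 0 < ρ → (∮ lam in C((0:ℂ), ρ), (lam ^ (-1 : ℤ) : ℂ)) = 2 * Real.pi * Complex.I := by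
    intro ρ hρ
    have := circleIntegral.integral_sub_inv_of_mem_ball (mem_ball_self hρ (x := (0:ℂ)))
    simp only [sub_zero] at this
    simpa [zpow_neg_one] using this
  -- specialized recursions at radius r
  have hJrec : ∀ (n : ℤ), n ≠ -1 → ∀ (x : X),
      (∮ lam in C((0:ℂ), r), lam ^ (n+1) • resolvent T lam x)
        = ∮ lam in C((0:ℂ), r), lam ^ n • resolvent T lam (T x) := by
    intro n hn x
    rw [hrec r hr0 le_rfl hrs n x, hzero n hn r, zero_smul, zero_add]
  have hJ0 : ∀ (x : X),
      (∮ lam in C((0:ℂ), r), lam ^ (0 : ℤ) • resolvent T lam x)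
        = (2 * Real.pi * Complex.I) • x
          + ∮ lam in C((0:ℂ), r), lam ^ (-1 : ℤ) • resolvent T lam (T x) := by
    intro x
    have := hrec r hr0 le_rfl hrs (-1) x
    rw [htwo r hr0] at this
    simpa using this
  -- iterate up
  have hup : ∀ (m : ℕ) (x : X),
      (∮ lam in C((0:ℂ), r), lam ^ (m : ℤ) • resolvent T lam x)
        = ∮ lam in C((0:ℂ), r), lam ^ (0 : ℤ) • resolvent T lam ((T ^ m) x) := by
    intro m
    induction m with
    | zero => intro x; simp
    | succ m ih =>
      intro x
      have hcast : ((m + 1 : ℕ) : ℤ) = (m : ℤ) + 1 := by push_cast; ring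
      rw [hcast, hJrec (m : ℤ) (by omega) x, ih (T x)]
      have he : (T ^ m) (T x) = (T ^ (m + 1)) x := by
        rw [pow_succ]; simp [ContinuousLinearMap.mul_apply]
      simp only [he]
  -- iterate down
  have hdown : ∀ (k : ℕ) (x : X),
      (∮ lam in C((0:ℂ), r), lam ^ (-1 : ℤ) • resolvent T lam x)
        = ∮ lam in C((0:ℂ), r), lam ^ (-1 - (k : ℤ)) • resolvent T lam ((T ^ k) x) := by
    intro k
    induction k with
    | zero => intro x; simp
    | succ k ih =>
      intro x
      rw [ih x]
      have hcast : (-1 - (k : ℤ)) = (-2 - (k : ℤ)) + 1 := by ring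
      rw [hcast, hJrec (-2 - (k : ℤ)) (by omega) ((T ^ k) x)]
      have hcast2 : (-2 - (k : ℤ)) = -1 - ((k + 1 : ℕ) : ℤ) := by push_cast; ring
      rw [hcast2]
      have he : T ((T ^ k) x) = (T ^ (k + 1)) x := by
        rw [pow_succ']; simp [ContinuousLinearMap.mul_apply]
      simp only [he]
  -- norm bounds
  have hboundr : ∀ (m : ℕ) (x : X),
      ‖∮ lam in C((0:ℂ), r), lam ^ (m : ℤ) • resolvent T lam x‖
        ≤ 2 * Real.pi * r * (r ^ m * (M * ‖x‖)) := by
    intro m x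
    refine circleIntegral.norm_integral_le_of_norm_le_const hr0.le ?_
    intro lam hl
    have hlA : lam ∈ A := hsphere r le_rfl hrs hl
    rw [mem_sphere_zero_iff_norm] at hl
    rw [norm_smul, norm_zpow, hl, zpow_natCast]
    refine mul_le_mul_of_nonneg_left ?_ (by positivity)
    calc ‖resolvent T lam x‖ ≤ ‖resolvent T lam‖ * ‖x‖ := (resolvent T lam).le_opNorm x
      _ ≤ M * ‖x‖ := mul_le_mul_of_nonneg_right (hM lam hlA) (norm_nonneg x)
  have hbounds : ∀ (k : ℕ) (x : X),
      ‖∮ lam in C((0:ℂ), s), lam ^ (-1 - (k : ℤ)) • resolvent T lam x‖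
        ≤ 2 * Real.pi * s * (M * ‖x‖) := by
    intro k x
    refine circleIntegral.norm_integral_le_of_norm_le_const (by linarith) ?_
    intro lam hl
    have hlA : lam ∈ A := hsphere s hrs le_rfl hl
    rw [mem_sphere_zero_iff_norm] at hl
    rw [norm_smul, norm_zpow, hl]
    have h1 : s ^ (-1 - (k : ℤ)) ≤ 1 := zpow_le_one_of_nonpos₀ hs1.le (by omega)
    calc s ^ (-1 - (k : ℤ)) * ‖resolvent T lam x‖ ≤ 1 * ‖resolvent T lam x‖ :=
          mul_le_mul_of_nonneg_right h1 (norm_nonneg _)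
      _ = ‖resolvent T lam x‖ := one_mul _
      _ ≤ ‖resolvent T lam‖ * ‖x‖ := (resolvent T lam).le_opNorm x
      _ ≤ M * ‖x‖ := mul_le_mul_of_nonneg_right (hM lam hlA) (norm_nonneg x)
  -- smallness along a subsequence
  have hfreq : ∀ ε : ℝ, 0 < ε → ∀ m₀ : ℕ, ∃ k : ℕ, ‖(T ^ (m₀ + 1 + k)) z‖ < ε := by
    intro ε hε m₀
    have hlt : Filter.liminf (fun n : ℕ => (‖(T ^ n) z‖₊ : ℝ≥0∞)) Filter.atTop
        < ENNReal.ofReal ε := by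
      rw [hz]; exact ENNReal.ofReal_pos.2 hε
    have hfr := Filter.frequently_lt_of_liminf_lt (h := hlt)
    obtain ⟨n, hn1, hn2⟩ := (hfr.and_eventually (Filter.eventually_ge_atTop (m₀ + 1))).exists
    refine ⟨n - (m₀ + 1), ?_⟩
    have he : m₀ + 1 + (n - (m₀ + 1)) = n := by omega
    rw [he]
    rwa [← enorm_eq_nnnorm, ← ofReal_norm, ENNReal.ofReal_lt_ofReal_iff hε] at hn1
  -- the main estimate
  have hmain : ∀ m : ℕ, ‖(T ^ m) z‖ ≤ M * ‖z‖ * r ^ (m + 1) := by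
    intro m
    have hid : (2 * (Real.pi : ℂ) * Complex.I) • (T ^ m) z
        = (∮ lam in C((0:ℂ), r), lam ^ (m : ℤ) • resolvent T lam z)
          - ∮ lam in C((0:ℂ), r), lam ^ (-1 : ℤ) • resolvent T lam ((T ^ (m + 1)) z) := by
      have h0 := hJ0 ((T ^ m) z)
      rw [← hup m z] at h0
      have he : T ((T ^ m) z) = (T ^ (m + 1)) z := by
        rw [pow_succ']; simp [ContinuousLinearMap.mul_apply]
      rw [he] at h0
      exact eq_sub_of_add_eq h0.symm
    have hπ : (0:ℝ) < 2 * Real.pi := by positivity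
    have hnorm2 : ‖(2 * (Real.pi : ℂ) * Complex.I)‖ = 2 * Real.pi := by
      simp [norm_mul, Complex.norm_real, Real.norm_eq_abs, abs_of_pos Real.pi_pos]
    refine le_of_forall_pos_le_add ?_
    intro ε hε
    have hsM : (0:ℝ) ≤ s * M := mul_nonneg (by linarith) hM0
    set ε' : ℝ := ε / (s * M + 1) with hε'def
    have hε'pos : 0 < ε' := div_pos hε (by linarith)
    obtain ⟨k, hk⟩ := hfreq ε' hε'pos m
    -- rewrite the second integral
    have hdwn := hdown k ((T ^ (m + 1)) z)
    have hepow : (T ^ k) ((T ^ (m + 1)) z) = (T ^ (m + 1 + k)) z := by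
      rw [← ContinuousLinearMap.mul_apply, ← pow_add, add_comm k (m + 1)]
    rw [hepow] at hdwn
    -- norm inequality
    have hineq : 2 * Real.pi * ‖(T ^ m) z‖
        ≤ 2 * Real.pi * r * (r ^ m * (M * ‖z‖))
          + 2 * Real.pi * s * (M * ‖(T ^ (m + 1 + k)) z‖) := by
      have h1 : ‖(2 * (Real.pi : ℂ) * Complex.I) • (T ^ m) z‖ = 2 * Real.pi * ‖(T ^ m) z‖ := by
        rw [norm_smul, hnorm2]
      calc 2 * Real.pi * ‖(T ^ m) z‖
          = ‖(2 * (Real.pi : ℂ) * Complex.I) • (T ^ m) z‖ := h1.symm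
        _ = ‖(∮ lam in C((0:ℂ), r), lam ^ (m : ℤ) • resolvent T lam z)
              - ∮ lam in C((0:ℂ), r), lam ^ (-1 : ℤ) • resolvent T lam ((T ^ (m + 1)) z)‖ := by
            rw [hid]
        _ ≤ ‖∮ lam in C((0:ℂ), r), lam ^ (m : ℤ) • resolvent T lam z‖
              + ‖∮ lam in C((0:ℂ), r), lam ^ (-1 : ℤ) • resolvent T lam ((T ^ (m + 1)) z)‖ :=
            norm_sub_le _ _
        _ ≤ 2 * Real.pi * r * (r ^ m * (M * ‖z‖))
              + 2 * Real.pi * s * (M * ‖(T ^ (m + 1 + k)) z‖) := by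
            refine add_le_add (hboundr m z) ?_
            rw [hdwn, ← hJs (-1 - (k : ℤ)) ((T ^ (m + 1 + k)) z)]
            exact hbounds k ((T ^ (m + 1 + k)) z)
    have hterm : s * (M * ‖(T ^ (m + 1 + k)) z‖) ≤ ε := by
      have h2 : s * (M * ‖(T ^ (m + 1 + k)) z‖) ≤ s * M * ε' := by
        rw [← mul_assoc]
        exact mul_le_mul_of_nonneg_left hk.le hsM
      have h3 : s * M * ε' ≤ ε := by
        rw [hε'def]
        calc s * M * (ε / (s * M + 1)) = (s * M / (s * M + 1)) * ε := by ring
          _ ≤ 1 * ε := by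
              refine mul_le_mul_of_nonneg_right ?_ hε.le
              rw [div_le_one (by linarith)]
              linarith
          _ = ε := one_mul ε
      linarith
    have hfin : 2 * Real.pi * ‖(T ^ m) z‖
        ≤ 2 * Real.pi * (M * ‖z‖ * r ^ (m + 1) + ε) := by
      have hr' : 2 * Real.pi * r * (r ^ m * (M * ‖z‖)) = 2 * Real.pi * (M * ‖z‖ * r ^ (m + 1)) := by
        rw [pow_succ]; ring
      have hs' : 2 * Real.pi * s * (M * ‖(T ^ (m + 1 + k)) z‖) ≤ 2 * Real.pi * ε := by
        calc 2 * Real.pi * s * (M * ‖(T ^ (m + 1 + k)) z‖)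
            = 2 * Real.pi * (s * (M * ‖(T ^ (m + 1 + k)) z‖)) := by ring
          _ ≤ 2 * Real.pi * ε := mul_le_mul_of_nonneg_left hterm hπ.le
      calc 2 * Real.pi * ‖(T ^ m) z‖
          ≤ 2 * Real.pi * r * (r ^ m * (M * ‖z‖))
              + 2 * Real.pi * s * (M * ‖(T ^ (m + 1 + k)) z‖) := hineq
        _ ≤ 2 * Real.pi * (M * ‖z‖ * r ^ (m + 1)) + 2 * Real.pi * ε := by
            rw [← hr']; exact add_le_add le_rfl hs'
        _ = 2 * Real.pi * (M * ‖z‖ * r ^ (m + 1) + ε) := by ring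
    exact (mul_le_mul_iff_right₀ hπ).1 hfin
  -- conclude
  have hg : Filter.Tendsto (fun m : ℕ => M * ‖z‖ * r ^ (m + 1)) Filter.atTop (nhds 0) := by
    have h1 := (tendsto_pow_atTop_nhds_zero_of_lt_one hr0.le hr1).comp (tendsto_add_atTop_nat 1)
    have h2 := h1.const_mul (M * ‖z‖)
    simpa [Function.comp] using h2
  exact squeeze_zero (fun n => norm_nonneg _) hmain hg


end Aux

/-- If `T` is Li-Yorke chaotic, the spectrum of `T` meets the unit circle. -/
theorem liYorkeChaotic_spectrum_inter_unitCircle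
    {X : Type*} [NormedAddCommGroup X] [NormedSpace ℂ X] [CompleteSpace X]
    (T : X →L[ℂ] X) (h : LiYorkeChaotic T) :
    ∃ lam ∈ spectrum ℂ T, ‖lam‖ = 1 := by
  classical
  by_contra hc
  push_neg at hc
  obtain ⟨Γ, hΓc, hΓ⟩ := h
  have hnt : Γ.Nontrivial := by
    by_contra hs
    rw [Set.not_nontrivial_iff] at hs
    exact hΓc hs.countable
  obtain ⟨x, hx, y, hy, hxy⟩ := hnt
  obtain ⟨hli, hls⟩ := hΓ x hx y hy hxy
  have hsub : ∀ n : ℕ, (T ^ n) x - (T ^ n) y = (T ^ n) (x - y) := fun n => (map_sub (T ^ n) x y).symm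
  simp only [hsub] at hli hls
  have hkey := key_tendsto T (fun lam hl habs => hc lam hl habs) (x - y) hli
  have htend : Filter.Tendsto (fun n : ℕ => (‖(T ^ n) (x - y)‖₊ : ℝ≥0∞)) Filter.atTop (nhds 0) := by
    rw [← ENNReal.coe_zero]
    rw [ENNReal.tendsto_coe]
    have : Filter.Tendsto (fun n : ℕ => ‖(T ^ n) (x - y)‖₊) Filter.atTop (nhds ‖(0 : X)‖₊) := by
      apply Filter.Tendsto.nnnorm
      exact tendsto_zero_iff_norm_tendsto_zero.2 hkey
    simpa using this
  rw [htend.limsup_eq] at hls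
  exact lt_irrefl 0 hls
end

section
/- Let X be a Banach space and T : X → X a bounded linear operator. If T is Li-Yorke chaotic, then T^n is Li-Yorke chaotic for every positive integer n. -/
open Filter Topology
open scoped ENNReal

section Aux

variable {𝕜 : Type*} [RCLike 𝕜] {X : Type*} [NormedAddCommGroup X] [NormedSpace 𝕜 X]

lemma isLiYorkePair_pow (T : X →L[𝕜] X) (n : ℕ) (hn : 0 < n) {x y : X}
    (h : IsLiYorkePair T x y) : IsLiYorkePair (T ^ n) x y := by
  obtain ⟨h1, h2⟩ := h
  set g : ℕ → ℝ≥0∞ := fun k => (‖(T ^ k) x - (T ^ k) y‖₊ : ℝ≥0∞) with hg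
  have key : ∀ a k : ℕ, g (a + k) ≤ (‖T ^ a‖₊ : ℝ≥0∞) * g k := by
    intro a k
    have : (T ^ (a + k)) x - (T ^ (a + k)) y = (T ^ a) ((T ^ k) x - (T ^ k) y) := by
      rw [pow_add, map_sub]; rfl
    simp only [hg, this]
    exact_mod_cast ENNReal.coe_le_coe.mpr ((T ^ a).le_opNNNorm _)
  set M : NNReal := 1 + ∑ s ∈ Finset.range (n + 1), ‖T ^ s‖₊ with hM
  have hMle : ∀ a : ℕ, a ≤ n → ‖T ^ a‖₊ ≤ M := by
    intro a ha
    calc ‖T ^ a‖₊ ≤ ∑ s ∈ Finset.range (n + 1), ‖T ^ s‖₊ :=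
          Finset.single_le_sum (f := fun s => ‖T ^ s‖₊) (fun i _ => zero_le)
            (Finset.mem_range.mpr (by omega))
      _ ≤ M := le_add_self
  have hM1 : (1 : NNReal) ≤ M := le_add_of_nonneg_right zero_le
  have hM0 : (M : ℝ≥0∞) ≠ 0 := by exact_mod_cast (lt_of_lt_of_le one_pos hM1).ne'
  have hMt : (M : ℝ≥0∞) ≠ ⊤ := ENNReal.coe_ne_top
  have key2 : ∀ a k : ℕ, a ≤ n → g (a + k) ≤ (M : ℝ≥0∞) * g k := fun a k ha =>
    (key a k).trans (mul_le_mul_left (ENNReal.coe_le_coe.mpr (hMle a ha)) _)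
  have hgn : ∀ m : ℕ, (‖((T ^ n) ^ m) x - ((T ^ n) ^ m) y‖₊ : ℝ≥0∞) = g (n * m) := by
    intro m; rw [hg, ← pow_mul]
  constructor
  · -- liminf part
    simp only [hgn]
    have hle : ∀ ε : ℝ≥0∞, 0 < ε →
        Filter.liminf (fun m : ℕ => g (n * m)) Filter.atTop ≤ ε := by
      intro ε hε
      refine Filter.liminf_le_of_frequently_le ?_ (by isBoundedDefault)
      have hdiv : 0 < ε / M := ENNReal.div_pos hε.ne' hMt
      have hfreq : ∃ᶠ k in Filter.atTop, g k < ε / M :=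
        Filter.frequently_lt_of_liminf_lt (by isBoundedDefault) (by rw [h1]; exact hdiv)
      rw [Filter.frequently_atTop] at hfreq ⊢
      intro N
      obtain ⟨k, hk, hklt⟩ := hfreq (n * N)
      refine ⟨k / n + 1, ?_, ?_⟩
      · have : N ≤ k / n := (Nat.le_div_iff_mul_le hn).mpr (by rw [mul_comm]; exact hk)
        omega
      · have hkm : n * (k / n + 1) = (n - k % n) + k := by
          have h1 := Nat.div_add_mod k n
          have h2 := Nat.mod_lt k hn
          have h3 : n * (k / n + 1) = n * (k / n) + n := by ring
          omega
        have han : n - k % n ≤ n := by omega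
        calc g (n * (k / n + 1)) = g ((n - k % n) + k) := by rw [hkm]
          _ ≤ (M : ℝ≥0∞) * g k := key2 _ _ han
          _ ≤ (M : ℝ≥0∞) * (ε / M) := mul_le_mul_right hklt.le _
          _ ≤ ε := ENNReal.mul_div_le
    by_contra hne
    have hpos : 0 < Filter.liminf (fun m : ℕ => g (n * m)) Filter.atTop :=
      pos_iff_ne_zero.mpr hne
    obtain ⟨ε, hε0, hεlt⟩ := exists_between hpos
    exact absurd (hle ε hε0) (not_le.mpr hεlt)
  · -- limsup part
    simp only [hgn]
    obtain ⟨c, hc0, hclt⟩ := exists_between h2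
    have hfreq : ∃ᶠ k in Filter.atTop, c < g k :=
      Filter.frequently_lt_of_lt_limsup (by isBoundedDefault) hclt
    have hfreq2 : ∃ᶠ m in Filter.atTop, c / M ≤ g (n * m) := by
      rw [Filter.frequently_atTop] at hfreq ⊢
      intro N
      obtain ⟨k, hk, hck⟩ := hfreq (n * N)
      refine ⟨k / n, (Nat.le_div_iff_mul_le hn).mpr (by rw [mul_comm]; exact hk), ?_⟩
      have hkm : k = (k % n) + n * (k / n) := by
        have := Nat.div_add_mod k n; omega
      have : c ≤ (M : ℝ≥0∞) * g (n * (k / n)) := by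
        calc c ≤ g k := hck.le
          _ = g ((k % n) + n * (k / n)) := by rw [← hkm]
          _ ≤ (M : ℝ≥0∞) * g (n * (k / n)) := key2 _ _ (Nat.mod_lt k hn).le
      exact ENNReal.div_le_of_le_mul (by rwa [mul_comm] at this)
    have : c / M ≤ Filter.limsup (fun m : ℕ => g (n * m)) Filter.atTop :=
      Filter.le_limsup_of_frequently_le hfreq2
    exact lt_of_lt_of_le (ENNReal.div_pos hc0.ne' hMt) this

end Aux

/-- If `T` is Li-Yorke chaotic, then so is `T ^ n` for every positive integer `n`. -/
theorem liYorkeChaotic_pow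
    {𝕜 : Type*} [RCLike 𝕜] {X : Type*} [NormedAddCommGroup X] [NormedSpace 𝕜 X]
    [CompleteSpace X] (T : X →L[𝕜] X) (h : LiYorkeChaotic T) (n : ℕ) (hn : 0 < n) :
    LiYorkeChaotic (T ^ n) := by
  obtain ⟨Γ, hΓc, hΓ⟩ := h
  exact ⟨Γ, hΓc, fun x hx y hy hxy => isLiYorkePair_pow T n hn (hΓ x hx y hy hxy)⟩
end

section
/- Let X be a Banach space and T : X → X a bounded linear operator. Then T is Li-Yorke chaotic if and only if T satisfies the Li-Yorke Chaos Criterion. -/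
open Filter Topology
open scoped ENNReal

private lemma liminf_nnnorm_aux {X : Type*} [NormedAddCommGroup X] {g : ℕ → X} :
    Filter.liminf (fun n => (‖g n‖₊ : ℝ≥0∞)) Filter.atTop = 0 ↔
      ∀ ε : ℝ, 0 < ε → ∃ᶠ n in Filter.atTop, ‖g n‖ < ε := by
  constructor
  · intro h ε hε
    by_contra hc
    rw [Filter.not_frequently] at hc
    have hev : ∀ᶠ n in Filter.atTop, (ε.toNNReal : ℝ≥0∞) ≤ (‖g n‖₊ : ℝ≥0∞) := by
      filter_upwards [hc] with n hn
      push_neg at hn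
      exact_mod_cast ENNReal.coe_le_coe.2 (by simpa [← norm_toNNReal] using Real.toNNReal_mono hn)
    have : (ε.toNNReal : ℝ≥0∞) ≤ Filter.liminf (fun n => (‖g n‖₊ : ℝ≥0∞)) Filter.atTop := by
      calc (ε.toNNReal : ℝ≥0∞)
          = Filter.liminf (fun _ : ℕ => (ε.toNNReal : ℝ≥0∞)) Filter.atTop :=
            (Filter.liminf_const _).symm
      _ ≤ _ := Filter.liminf_le_liminf hev
    rw [h] at this
    simp only [nonpos_iff_eq_zero, ENNReal.coe_eq_zero, Real.toNNReal_eq_zero] at this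
    linarith
  · intro h
    refine le_antisymm ?_ zero_le'
    refine ENNReal.le_of_forall_pos_le_add fun ε hε _ => ?_
    rw [zero_add]
    refine Filter.liminf_le_of_frequently_le' ?_
    have := h ε (by exact_mod_cast hε)
    refine this.mono fun n hn => ?_
    rw [ENNReal.coe_le_coe, ← norm_toNNReal]
    exact Real.toNNReal_mono hn.le |>.trans_eq (Real.toNNReal_coe)

private lemma limsup_nnnorm_aux {X : Type*} [NormedAddCommGroup X] {g : ℕ → X} :
    0 < Filter.limsup (fun n => (‖g n‖₊ : ℝ≥0∞)) Filter.atTop ↔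
      ∃ ε : ℝ, 0 < ε ∧ ∃ᶠ n in Filter.atTop, ε < ‖g n‖ := by
  constructor
  · intro h
    obtain ⟨δ, hδ0, hδL⟩ := exists_between h
    have hδtop : δ ≠ ⊤ := (hδL.trans_le le_top).ne
    have hfreq : ∃ᶠ n in Filter.atTop, δ < (‖g n‖₊ : ℝ≥0∞) := by
      by_contra hc
      rw [Filter.not_frequently] at hc
      have : Filter.limsup (fun n => (‖g n‖₊ : ℝ≥0∞)) Filter.atTop ≤ δ := by
        refine Filter.limsup_le_of_le ?_ ?_
        · isBoundedDefault
        · filter_upwards [hc] with n hn; push_neg at hn; exact hn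
      exact absurd (hδL.trans_le this) (lt_irrefl _)
    refine ⟨δ.toReal, ENNReal.toReal_pos hδ0.ne' hδtop, hfreq.mono fun n hn => ?_⟩
    have := ENNReal.toReal_strict_mono (by simp) hn
    simpa using this
  · rintro ⟨ε, hε, hfreq⟩
    have : (ε.toNNReal : ℝ≥0∞) ≤ Filter.limsup (fun n => (‖g n‖₊ : ℝ≥0∞)) Filter.atTop := by
      refine Filter.le_limsup_of_frequently_le' (hfreq.mono fun n hn => ?_)
      rw [ENNReal.coe_le_coe, ← norm_toNNReal]
      exact Real.toNNReal_mono hn.le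
    refine lt_of_lt_of_le ?_ this
    simpa [ENNReal.coe_pos] using Real.toNNReal_pos.2 hε

/-- `T` is Li-Yorke chaotic iff it satisfies the Li-Yorke Chaos Criterion. -/
theorem liYorkeChaotic_iff_LYChaosCriterion
    {𝕜 : Type*} [RCLike 𝕜] {X : Type*} [NormedAddCommGroup X] [NormedSpace 𝕜 X]
    [CompleteSpace X] (T : X →L[𝕜] X) :
    LiYorkeChaotic T ↔ LYChaosCriterion T := by
  constructor
  · -- Li-Yorke chaotic implies the criterion
    rintro ⟨Γ, hΓ, hpair⟩
    obtain ⟨x, hx, y, hy, hxy⟩ : ∃ x ∈ Γ, ∃ y ∈ Γ, x ≠ y := by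
      by_contra h
      push_neg at h
      exact hΓ (Set.Subsingleton.countable (fun a ha b hb => h a ha b hb))
    obtain ⟨h1, h2⟩ := hpair x hx y hy hxy
    set z := x - y with hzdef
    have hsub : ∀ n : ℕ, (T ^ n) x - (T ^ n) y = (T ^ n) z := fun n => (map_sub _ _ _).symm
    simp only [hsub] at h1 h2
    have hA : ∀ ε : ℝ, 0 < ε → ∃ᶠ n in atTop, ‖(T ^ n) z‖ < ε := liminf_nnnorm_aux.mp h1
    have hB : ∃ ε : ℝ, 0 < ε ∧ ∃ᶠ n in atTop, ε < ‖(T ^ n) z‖ := limsup_nnnorm_aux.mp h2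
    obtain ⟨φ, hφmono, hφ⟩ := Filter.extraction_forall_of_frequently
      (P := fun j k => 0 < k ∧ ‖(T ^ k) z‖ < 1 / (j + 1))
      (fun j => ((hA (1 / (j + 1)) (by positivity)).and_eventually (eventually_gt_atTop 0)).mono
        (fun k hk => ⟨hk.2, hk.1⟩))
    have hz0 : Filter.Tendsto (fun k => (T ^ (φ k)) z) atTop (nhds 0) := by
      rw [tendsto_zero_iff_norm_tendsto_zero]
      exact squeeze_zero (fun k => norm_nonneg _) (fun k => (hφ k).2.le)
        tendsto_one_div_add_atTop_nhds_zero_nat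
    refine ⟨φ, Set.range (fun j => (T ^ j) z), hφmono, fun k => (hφ k).1, ?_, ?_⟩
    · rintro w ⟨j, rfl⟩
      have hcomm : ∀ k : ℕ, (T ^ (φ k)) ((T ^ j) z) = (T ^ j) ((T ^ (φ k)) z) := by
        intro k
        rw [← ContinuousLinearMap.mul_apply, ← ContinuousLinearMap.mul_apply, ← pow_add,
          ← pow_add, add_comm]
      simp only [hcomm]
      have := ((T ^ j).continuous.tendsto 0).comp hz0
      simpa [Function.comp_def] using this
    · intro C
      by_contra hC
      push_neg at hC
      obtain ⟨δ, hδ, hfreq⟩ := hB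
      set C₁ : ℝ := max C 1 with hC₁
      have hC₁pos : 0 < C₁ := lt_of_lt_of_le one_pos (le_max_right _ _)
      obtain ⟨n₀, hn₀⟩ := (hA (δ / C₁) (by positivity)).exists
      have hmem : (T ^ n₀) z ∈ closure ((Submodule.span 𝕜 (Set.range fun j => (T ^ j) z) :
          Submodule 𝕜 X) : Set X) :=
        subset_closure (Submodule.subset_span ⟨n₀, rfl⟩)
      have hsmall : ∀ n, n₀ ≤ n → ‖(T ^ n) z‖ < δ := by
        intro n hn
        have key := hC (n - n₀) _ hmem
        have heq : (T ^ (n - n₀)) ((T ^ n₀) z) = (T ^ n) z := by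
          rw [← ContinuousLinearMap.mul_apply, ← pow_add, Nat.sub_add_cancel hn]
        rw [heq] at key
        calc ‖(T ^ n) z‖ ≤ C * ‖(T ^ n₀) z‖ := key
          _ ≤ C₁ * ‖(T ^ n₀) z‖ :=
              mul_le_mul_of_nonneg_right (le_max_left _ _) (norm_nonneg _)
          _ < C₁ * (δ / C₁) := mul_lt_mul_of_pos_left hn₀ hC₁pos
          _ = δ := by field_simp
      obtain ⟨n, hn1, hn2⟩ := (hfreq.and_eventually (eventually_ge_atTop n₀)).exists
      exact absurd hn1 (not_lt.2 (hsmall n hn2).le)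
  · -- the criterion implies Li-Yorke chaos
    rintro ⟨nk, X₀, hmono, _hpos, ha, hb⟩
    -- Step 1: Baire category argument producing a semi-irregular vector
    have key : ∃ z : X, (∀ ε : ℝ, 0 < ε → ∃ᶠ n in atTop, ‖(T ^ n) z‖ < ε) ∧
        (∃ᶠ n in atTop, 1 < ‖(T ^ n) z‖) := by
      set D := (Submodule.span 𝕜 X₀ : Submodule 𝕜 X) with hD
      set Yc := D.topologicalClosure with hYc
      haveI : CompleteSpace ↥Yc := (Submodule.isClosed_topologicalClosure D).completeSpace_coe
      have hDtend : ∀ v ∈ D, Filter.Tendsto (fun k => (T ^ (nk k)) v) atTop (nhds 0) := by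
        intro v hv
        induction hv using Submodule.span_induction with
        | mem x hx => exact ha x hx
        | zero => simpa using tendsto_const_nhds
        | add x y _ _ hx hy => simpa using hx.add hy
        | smul c x _ hx => simpa using hx.const_smul c
      set f : (ℕ × ℕ) ⊕ ℕ → Set ↥Yc := Sum.elim
        (fun p => {w : ↥Yc | ∃ n, p.2 ≤ n ∧ ‖(T ^ n) (w : X)‖ < 1 / (p.1 + 1)})
        (fun C => {w : ↥Yc | ∃ n, (C : ℝ) < ‖(T ^ n) (w : X)‖}) with hf
      have hcont : ∀ n : ℕ, Continuous (fun w : ↥Yc => ‖(T ^ n) (w : X)‖) :=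
        fun n => ((T ^ n).continuous.comp continuous_subtype_val).norm
      have hopen : ∀ i, IsOpen (f i) := by
        rintro (⟨q, N⟩ | C)
        · have : f (Sum.inl (q, N)) = ⋃ n, ⋃ (_ : N ≤ n),
              {w : ↥Yc | ‖(T ^ n) (w : X)‖ < 1 / (q + 1)} := by
            ext w; simp [hf, Set.mem_setOf_eq]
          rw [this]
          exact isOpen_iUnion fun n => isOpen_iUnion fun _ =>
            isOpen_lt (hcont n) continuous_const
        · have : f (Sum.inr C) = ⋃ n, {w : ↥Yc | (C : ℝ) < ‖(T ^ n) (w : X)‖} := by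
            ext w; simp [hf, Set.mem_setOf_eq]
          rw [this]
          exact isOpen_iUnion fun n => isOpen_lt continuous_const (hcont n)
      have hDdense : Dense {w : ↥Yc | (w : X) ∈ D} := by
        intro w
        rw [closure_subtype]
        have himg : Subtype.val '' {w : ↥Yc | (w : X) ∈ D} = (D : Set X) := by
          ext v
          constructor
          · rintro ⟨u, hu, rfl⟩; exact hu
          · intro hv
            exact ⟨⟨v, Submodule.le_topologicalClosure D hv⟩, hv, rfl⟩
        rw [himg]
        exact w.2
      have hdense : ∀ i, Dense (f i) := by
        rintro (⟨q, N⟩ | C)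
        · refine Dense.mono ?_ hDdense
          intro w hw
          have htd := hDtend _ hw
          rw [tendsto_zero_iff_norm_tendsto_zero] at htd
          have h1 : ∀ᶠ k in atTop, ‖(T ^ (nk k)) (w : X)‖ < 1 / (q + 1) :=
            htd.eventually (eventually_lt_nhds (by positivity : (0:ℝ) < 1 / (q+1)) |>.mono
              fun x hx => hx)
          have h2 : ∀ᶠ k in atTop, N ≤ nk k := by
            filter_upwards [eventually_ge_atTop N] with k hk
            exact le_trans hk (hmono.le_apply)
          obtain ⟨k, hk1, hk2⟩ := (h1.and h2).exists
          exact ⟨nk k, hk2, hk1⟩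
        · rw [Metric.dense_iff]
          intro w₀ r hr
          by_contra hc
          push_neg at hc
          have hball : ∀ w : ↥Yc, dist w w₀ < r → ∀ n : ℕ, ‖(T ^ n) (w : X)‖ ≤ C := by
            intro w hw n
            by_contra hcn
            push_neg at hcn
            have : w ∈ Metric.ball w₀ r ∩ f (Sum.inr C) :=
              ⟨by simpa [Metric.mem_ball] using hw, ⟨n, hcn⟩⟩
            rw [hc] at this
            exact this
          have hbound : ∀ v : X, v ∈ Yc → ∀ n : ℕ, ‖(T ^ n) v‖ ≤ (4 * C / r) * ‖v‖ := by
            intro v hv n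
            rcases eq_or_ne v 0 with rfl | hv0
            · simp
            · set t : ℝ := r / (2 * ‖v‖) with ht
              have hvpos : 0 < ‖v‖ := norm_pos_iff.2 hv0
              have htpos : 0 < t := by positivity
              have hmemtv : (t : 𝕜) • v ∈ Yc := Yc.smul_mem _ hv
              set w₁ : ↥Yc := w₀ + ⟨(t:𝕜) • v, hmemtv⟩ with hw₁
              have hdist : dist w₁ w₀ < r := by
                rw [dist_eq_norm]
                have h1 : w₁ - w₀ = ⟨(t:𝕜) • v, hmemtv⟩ := by rw [hw₁]; abel
                rw [h1]
                have h2 : ‖(⟨(t:𝕜) • v, hmemtv⟩ : ↥Yc)‖ = t * ‖v‖ := by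
                  have h3 : ‖(⟨(t:𝕜) • v, hmemtv⟩ : ↥Yc)‖ = ‖(t:𝕜) • v‖ := rfl
                  rw [h3, norm_smul, RCLike.norm_ofReal, abs_of_pos htpos]
                have h4 : t * ‖v‖ = r / 2 := by rw [ht]; field_simp
                rw [h2, h4]
                linarith
              have hb1 := hball w₁ hdist n
              have hb0 := hball w₀ (by simpa using hr) n
              have hcoe : (w₁ : X) = (w₀ : X) + (t:𝕜) • v := rfl
              have hkey : ‖(T ^ n) ((t:𝕜) • v)‖ ≤ 2 * C := by
                have : (T ^ n) ((t:𝕜) • v) = (T ^ n) (w₁ : X) - (T ^ n) (w₀ : X) := by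
                  rw [← map_sub, hcoe]; congr 1; abel
                rw [this]
                calc ‖(T ^ n) (w₁:X) - (T ^ n) (w₀:X)‖
                    ≤ ‖(T ^ n) (w₁:X)‖ + ‖(T ^ n) (w₀:X)‖ := norm_sub_le _ _
                  _ ≤ 2 * C := by linarith
              rw [map_smul, norm_smul, RCLike.norm_ofReal, abs_of_pos htpos] at hkey
              have := (le_div_iff₀' htpos).2 hkey
              calc ‖(T ^ n) v‖ ≤ 2 * C / t := this
                _ = (4 * C / r) * ‖v‖ := by
                  rw [ht]; field_simp; ring
          obtain ⟨m, y, hy, hlt⟩ := hb (4 * C / r)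
          have hyYc : y ∈ Yc := hy
          exact absurd hlt (not_lt.2 (hbound y hyYc m))
      haveI : BaireSpace ↥Yc := by
        set_option synthInstance.maxHeartbeats 1000000 in infer_instance
      have hdenseAll : Dense (⋂ i, f i) := dense_iInter_of_isOpen hopen hdense
      obtain ⟨z₀, hz₀⟩ := hdenseAll.nonempty
      simp only [Set.mem_iInter] at hz₀
      refine ⟨(z₀ : X), ?_, ?_⟩
      · intro ε hε
        obtain ⟨q, hq⟩ := exists_nat_one_div_lt hε
        rw [frequently_atTop]
        intro N
        obtain ⟨n, hn1, hn2⟩ := hz₀ (Sum.inl (q, N))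
        exact ⟨n, hn1, hn2.trans hq⟩
      · rw [frequently_atTop]
        intro N
        set M : ℝ := ∑ k ∈ Finset.range N, ‖(T ^ k) (z₀ : X)‖ with hM
        obtain ⟨C, hC⟩ := exists_nat_gt (max M 1)
        obtain ⟨n, hn⟩ := hz₀ (Sum.inr C)
        have hnN : N ≤ n := by
          by_contra hlt
          push_neg at hlt
          have h1 : ‖(T ^ n) (z₀ : X)‖ ≤ M :=
            Finset.single_le_sum (f := fun k => ‖(T ^ k) (z₀ : X)‖)
              (fun i _ => norm_nonneg _) (Finset.mem_range.2 hlt)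
          have h2 : (C : ℝ) < M := lt_of_lt_of_le hn h1
          have := h2.trans_le (le_max_left M 1)
          linarith
        refine ⟨n, hnN, ?_⟩
        have : (1:ℝ) ≤ C := le_trans (le_max_right M 1) hC.le
        linarith
    -- Step 2: from the semi-irregular vector to an uncountable scrambled set
    obtain ⟨z, hA, hB⟩ := key
    have hz0 : z ≠ 0 := by
      rintro rfl
      obtain ⟨n, hn⟩ := hB.exists
      simp at hn
      linarith
    have hinj : Function.Injective (fun c : 𝕜 => c • z) := smul_left_injective 𝕜 hz0
    haveI : Uncountable 𝕜 := (RCLike.ofReal_injective (K := 𝕜)).uncountable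
    refine ⟨Set.range (fun c : 𝕜 => c • z), ?_, ?_⟩
    · intro hcount
      haveI : Countable (Set.range (fun c : 𝕜 => c • z)) := hcount.to_subtype
      haveI : Countable 𝕜 :=
        (Equiv.ofInjective _ hinj).countable_iff.2 inferInstance
      exact not_countable (α := 𝕜) inferInstance
    · rintro x ⟨a, rfl⟩ y ⟨b, rfl⟩ hxy
      have hab : a ≠ b := fun h => hxy (by rw [h])
      have habn : 0 < ‖a - b‖ := by
        rw [norm_pos_iff, sub_ne_zero]; exact hab
      have hnorm : ∀ n : ℕ, ‖(T ^ n) (a • z) - (T ^ n) (b • z)‖ = ‖a - b‖ * ‖(T ^ n) z‖ := by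
        intro n
        rw [← map_sub, ← sub_smul, map_smul, norm_smul]
      constructor
      · rw [liminf_nnnorm_aux]
        intro ε hε
        refine (hA (ε / ‖a - b‖) (by positivity)).mono fun n hn => ?_
        rw [hnorm n]
        calc ‖a - b‖ * ‖(T ^ n) z‖ < ‖a - b‖ * (ε / ‖a - b‖) :=
          mul_lt_mul_of_pos_left hn habn
        _ = ε := by field_simp
      · rw [limsup_nnnorm_aux]
        refine ⟨‖a - b‖, habn, hB.mono fun n hn => ?_⟩
        rw [hnorm n]
        nlinarith
end

section
/- Let X be a complex Banach space and T : X → X a bounded linear operator. If T satisfies the Strong Distributional Chaos Criterion with SDCC-constant r > 1, then for every r₀ with 1 ≤ r₀ ≤ r the spectrum of T intersects the circle {λ ∈ ℂ : |λ| = r₀}. -/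
open Filter Topology
open scoped ENNReal

lemma series_eq_resolvent_apply
    {X : Type*} [NormedAddCommGroup X] [NormedSpace ℂ X] [CompleteSpace X]
    (T : X →L[ℂ] X) (x : X) (lam : ℂ) (hlam : lam ∈ resolventSet ℂ T)
    (hsum : Summable (fun j : ℕ => lam⁻¹ ^ j • (T ^ j) x))
    (hne : lam ≠ 0) :
    ∑' j : ℕ, lam⁻¹ ^ (j + 1) • (T ^ j) x = (resolvent T lam) x := by
  set y : ℕ → X := fun j => (T ^ j) x with hy
  set g : ℕ → X := fun j => lam⁻¹ ^ j • y j with hg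
  have hsumg : Summable g := hsum
  have hsumS : Summable (fun j : ℕ => lam⁻¹ ^ (j + 1) • y j) := by
    have := (hsumg.const_smul lam⁻¹)
    refine this.congr fun j => ?_
    simp only [g, smul_smul]
    congr 1
    rw [pow_succ']
  set S : X := ∑' j : ℕ, lam⁻¹ ^ (j + 1) • y j with hS
  have hA : (algebraMap ℂ (X →L[ℂ] X) lam - T) S = x := by
    have h1 : lam • S = ∑' j : ℕ, g j := by
      rw [hS, ← Summable.tsum_const_smul lam hsumS]
      congr 1
      funext j
      rw [smul_smul]
      congr 1
      rw [pow_succ]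
      field_simp
    have h2 : T S = ∑' j : ℕ, g (j + 1) := by
      rw [hS, T.map_tsum hsumS]
      congr 1
      funext j
      rw [T.map_smul]
      simp only [g, hy]
      congr 1
      rw [pow_succ']
      rfl
    have h3 : (algebraMap ℂ (X →L[ℂ] X) lam - T) S = lam • S - T S := by
      simp [ContinuousLinearMap.sub_apply, Algebra.algebraMap_eq_smul_one]
    rw [h3, h1, h2, hsumg.tsum_eq_zero_add]
    simp [g, hy]
  have hu : IsUnit (algebraMap ℂ (X →L[ℂ] X) lam - T) := hlam
  have : (Ring.inverse (algebraMap ℂ (X →L[ℂ] X) lam - T)) ((algebraMap ℂ (X →L[ℂ] X) lam - T) S) = S := by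
    rw [← ContinuousLinearMap.mul_apply, Ring.inverse_mul_cancel _ hu, ContinuousLinearMap.one_apply]
  rw [hA] at this
  rw [← this]
  rfl

lemma key_estimate
    {X : Type*} [NormedAddCommGroup X] [NormedSpace ℂ X] [CompleteSpace X]
    (T : X →L[ℂ] X) (ρ M : ℝ) (hρ : 1 < ρ)
    (hres : ∀ lam : ℂ, ‖lam‖ = ρ → lam ∈ resolventSet ℂ T)
    (hMb : ∀ lam : ℂ, ‖lam‖ = ρ → ‖resolvent T lam‖ ≤ M)
    (x : X) (hx : Filter.Tendsto (fun k : ℕ => ‖(T ^ k) x‖) Filter.atTop (nhds 0))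
    (k : ℕ) :
    ‖(T ^ k) x‖ ≤ M * ρ ^ (k + 1) * ‖x‖ := by
  have hρ0 : (0:ℝ) < ρ := lt_trans one_pos hρ
  set y : ℕ → X := fun j => (T ^ j) x with hy
  -- bound on the orbit
  obtain ⟨B, hB⟩ : ∃ B : ℝ, ∀ j, ‖y j‖ ≤ B := by
    obtain ⟨B, hB⟩ := hx.bddAbove_range
    exact ⟨B, fun j => hB ⟨j, rfl⟩⟩
  have hB0 : 0 ≤ B := le_trans (norm_nonneg _) (hB 0)
  set c : ℝ := ρ⁻¹ with hc
  have hc0 : 0 < c := inv_pos.mpr hρ0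
  have hc1 : c < 1 := inv_lt_one_of_one_lt₀ hρ
  have hgeom : Summable (fun j : ℕ => B * c ^ (j + 1)) := by
    refine Summable.mul_left _ ?_
    have := (summable_geometric_of_lt_one hc0.le hc1).mul_left c
    refine this.congr fun j => ?_
    rw [pow_succ']
  -- summability of the series for each unit w
  have habs_inv : ∀ w : ℂ, ‖w‖ = 1 → ∀ j : ℕ,
      ‖(((ρ:ℂ) * w)⁻¹ ^ (j+1))‖ = c ^ (j+1) := by
    intro w hw j
    rw [norm_pow, norm_inv, norm_mul]
    simp [hw, Complex.norm_real, Real.norm_eq_abs, abs_of_pos hρ0, hc]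
  have habsρw : ∀ w : ℂ, ‖w‖ = 1 → ‖((ρ:ℂ) * w)‖ = ρ := by
    intro w hw
    rw [norm_mul, hw, mul_one, Complex.norm_real, Real.norm_eq_abs, abs_of_pos hρ0]
  have hwne : ∀ w : ℂ, ‖w‖ = 1 → ((ρ:ℂ) * w) ≠ 0 := by
    intro w hw h0
    have := habsρw w hw
    rw [h0] at this
    simp at this
    exact absurd this.symm (ne_of_gt hρ0)
  -- summability of series
  have hsumS : ∀ w : ℂ, ‖w‖ = 1 →
      Summable (fun j : ℕ => ((ρ:ℂ) * w)⁻¹ ^ (j+1) • y j) := by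
    intro w hw
    refine Summable.of_norm (hgeom.of_nonneg_of_le (fun j => norm_nonneg _) fun j => ?_)
    rw [norm_smul, habs_inv w hw j, mul_comm]
    exact mul_le_mul_of_nonneg_right (hB j) (by positivity)
  set S : ℂ → X := fun w => ∑' j : ℕ, ((ρ:ℂ) * w)⁻¹ ^ (j+1) • y j with hSdef
  -- the bound on S
  have hSbound : ∀ w : ℂ, ‖w‖ = 1 → ‖S w‖ ≤ M * ‖x‖ := by
    intro w hw
    have h1 : Summable (fun j : ℕ => ((ρ:ℂ) * w)⁻¹ ^ j • y j) := by
      refine Summable.of_norm ?_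
      have : Summable (fun j : ℕ => B * c ^ j) :=
        Summable.mul_left _ (summable_geometric_of_lt_one hc0.le hc1)
      refine this.of_nonneg_of_le (fun j => norm_nonneg _) fun j => ?_
      rw [norm_smul, norm_pow, norm_inv, habsρw w hw, mul_comm, ← hc]
      exact mul_le_mul_of_nonneg_right (hB j) (by positivity)
    have heq := series_eq_resolvent_apply T x ((ρ:ℂ) * w) (hres _ (habsρw w hw)) h1 (hwne w hw)
    rw [hSdef]
    simp only []
    rw [heq]
    calc ‖(resolvent T ((ρ:ℂ)*w)) x‖ ≤ ‖resolvent T ((ρ:ℂ)*w)‖ * ‖x‖ :=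
          ContinuousLinearMap.le_opNorm _ x
      _ ≤ M * ‖x‖ := mul_le_mul_of_nonneg_right (hMb _ (habsρw w hw)) (norm_nonneg x)
  -- main per-N estimate
  have hmain : ∀ N : ℕ, k < N →
      c^(k+1) * ‖y k‖ ≤ M * ‖x‖ + (B * c^(k+1) * (1-c)⁻¹) * c^N := by
    intro N hkN
    have hN0 : 0 < N := lt_of_le_of_lt (Nat.zero_le k) hkN
    have hNne : (N:ℂ) ≠ 0 := Nat.cast_ne_zero.mpr hN0.ne'
    have hNnee : (N:ℝ) ≠ 0 := Nat.cast_ne_zero.mpr hN0.ne'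
    set u : ℂ := Complex.exp (2 * Real.pi * Complex.I / N) with hu
    have hprim : IsPrimitiveRoot u N := Complex.isPrimitiveRoot_exp N hN0.ne'
    have huN : u ^ N = 1 := hprim.pow_eq_one
    have habs_u : ‖u‖ = 1 := by
      have h' : u = Complex.exp ((2 * Real.pi / N : ℝ) * Complex.I) := by
        rw [hu]; congr 1; push_cast; ring
      rw [h', Complex.norm_exp_ofReal_mul_I]
    have hune : u ≠ 0 := by
      intro h0; rw [h0] at habs_u; simp at habs_u
    have habs_ul : ∀ l : ℕ, ‖(u ^ l)‖ = 1 := by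
      intro l; rw [norm_pow, habs_u, one_pow]
    set v : ℕ → ℂ := fun j => u ^ (k+1) * (u⁻¹) ^ (j+1) with hv
    set coef : ℕ → ℂ :=
      fun j => (N:ℂ)⁻¹ * ((ρ:ℂ))⁻¹^(j+1) * ∑ l ∈ Finset.range N, (v j)^l with hcoef
    -- scalar identity
    have hscal : ∀ l j : ℕ,
        (u^l)^(k+1) * (((ρ:ℂ) * u^l)⁻¹)^(j+1) = ((ρ:ℂ))⁻¹^(j+1) * (v j)^l := by
      intro l j
      rw [hv]
      simp only [mul_inv, mul_pow, inv_pow, ← pow_mul]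
      rw [mul_comm l (k+1), mul_comm l (j+1)]
      ring
    have hsum_inner : ∀ l ∈ Finset.range N,
        Summable (fun j : ℕ => ((u^l)^(k+1) * (((ρ:ℂ) * u^l)⁻¹)^(j+1)) • y j) := by
      intro l _
      have := (hsumS (u^l) (habs_ul l)).const_smul ((u^l)^(k+1))
      refine this.congr fun j => ?_
      rw [smul_smul]
    have hsum_coef : Summable (fun j : ℕ => ∑ l ∈ Finset.range N,
        ((u^l)^(k+1) * (((ρ:ℂ) * u^l)⁻¹)^(j+1)) • y j) :=
      summable_sum hsum_inner
    have hA : (N:ℂ)⁻¹ • ∑ l ∈ Finset.range N, (u^l)^(k+1) • S (u^l)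
        = ∑' j : ℕ, coef j • y j := by
      have step1 : ∀ l : ℕ, (u^l)^(k+1) • S (u^l)
          = ∑' j : ℕ, ((u^l)^(k+1) * (((ρ:ℂ)*u^l)⁻¹)^(j+1)) • y j := by
        intro l
        rw [hSdef]
        simp only []
        rw [← Summable.tsum_const_smul _ (hsumS (u^l) (habs_ul l))]
        congr 1; funext j; rw [smul_smul]
      calc (N:ℂ)⁻¹ • ∑ l ∈ Finset.range N, (u^l)^(k+1) • S (u^l)
          = (N:ℂ)⁻¹ • ∑ l ∈ Finset.range N,
              ∑' j : ℕ, ((u^l)^(k+1) * (((ρ:ℂ)*u^l)⁻¹)^(j+1)) • y j := by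
            rw [Finset.sum_congr rfl (fun l _ => step1 l)]
        _ = (N:ℂ)⁻¹ • ∑' j : ℕ, ∑ l ∈ Finset.range N,
              ((u^l)^(k+1) * (((ρ:ℂ)*u^l)⁻¹)^(j+1)) • y j := by
            rw [Summable.tsum_finsetSum hsum_inner]
        _ = ∑' j : ℕ, (N:ℂ)⁻¹ • ∑ l ∈ Finset.range N,
              ((u^l)^(k+1) * (((ρ:ℂ)*u^l)⁻¹)^(j+1)) • y j := by
            rw [Summable.tsum_const_smul _ hsum_coef]
        _ = ∑' j : ℕ, coef j • y j := by
            congr 1; funext j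
            rw [← Finset.sum_smul, smul_smul, hcoef]
            congr 1
            simp only []
            rw [Finset.sum_congr rfl (fun l _ => hscal l j), ← Finset.mul_sum]
            ring
    -- coefficient facts
    have huinvN : (u⁻¹) ^ N = 1 := by rw [inv_pow, huN, inv_one]
    have hvN : ∀ j : ℕ, v j ^ N = 1 := by
      intro j
      rw [hv]
      simp only []
      rw [mul_pow, pow_right_comm, huN, one_pow, pow_right_comm, huinvN, one_pow, mul_one]
    have hvabs : ∀ j : ℕ, ‖(v j)‖ = 1 := by
      intro j
      rw [hv]
      simp only []
      rw [norm_mul, norm_pow, norm_pow, norm_inv, habs_u]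
      norm_num
    have hvone : v k = 1 := by
      rw [hv]
      simp only []
      rw [← mul_pow, mul_inv_cancel₀ hune, one_pow]
    have hcoef_k : coef k = ((ρ:ℂ))⁻¹^(k+1) := by
      rw [hcoef]
      simp only [hvone, one_pow, Finset.sum_const, Finset.card_range, nsmul_eq_mul, mul_one]
      rw [mul_comm, ← mul_assoc, mul_inv_cancel₀ hNne, one_mul]
    have hvne : ∀ j : ℕ, j ≠ k → j < k + N → v j ≠ 1 := by
      intro j hjk hjlt
      rcases lt_or_gt_of_ne hjk with hlt | hgt
      · have hvev : v j = u ^ (k - j) := by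
          rw [hv]
          simp only []
          have hk : k + 1 = (k - j) + (j + 1) := by omega
          rw [hk, pow_add, mul_assoc, ← mul_pow, mul_inv_cancel₀ hune, one_pow, mul_one]
        rw [hvev]
        exact hprim.pow_ne_one_of_pos_of_lt (by omega) (by omega)
      · have hvev : v j = ((u ^ (j - k))⁻¹) := by
          rw [hv]
          simp only []
          have hj : (u⁻¹)^(j+1) = (u⁻¹)^(j-k) * (u⁻¹)^(k+1) := by
            rw [← pow_add]; congr 1; omega
          rw [hj]
          rw [show u^(k+1) * ((u⁻¹)^(j-k) * (u⁻¹)^(k+1))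
              = (u⁻¹)^(j-k) * (u^(k+1) * (u⁻¹)^(k+1)) from by ring]
          rw [← mul_pow, mul_inv_cancel₀ hune, one_pow, mul_one, inv_pow]
        rw [hvev]
        intro h1
        exact hprim.pow_ne_one_of_pos_of_lt (show j - k ≠ 0 by omega)
          (show j - k < N by omega) (inv_eq_one.mp h1)
    have hcoef_zero : ∀ j : ℕ, j ≠ k → j < k + N → coef j = 0 := by
      intro j h1 h2
      rw [hcoef]
      simp only []
      rw [geom_sum_eq (hvne j h1 h2) N, hvN j]
      simp
    have hcoef_abs : ∀ j : ℕ, ‖(coef j)‖ ≤ c^(j+1) := by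
      intro j
      rw [hcoef]
      simp only []
      rw [norm_mul, norm_mul]
      have e1 : ‖((N:ℂ))⁻¹‖ = (N:ℝ)⁻¹ := by
        rw [norm_inv]; norm_num
      have e2 : ‖(((ρ:ℂ))⁻¹^(j+1))‖ = c^(j+1) := by
        rw [norm_pow, norm_inv, Complex.norm_real, Real.norm_eq_abs, abs_of_pos hρ0, hc]
      have e3 : ‖(∑ l ∈ Finset.range N, (v j)^l)‖ ≤ (N:ℝ) := by
        calc ‖(∑ l ∈ Finset.range N, (v j)^l)‖
            ≤ ∑ l ∈ Finset.range N, ‖((v j)^l)‖ :=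
              norm_sum_le _ _
          _ = ∑ l ∈ Finset.range N, (1:ℝ) := by
              refine Finset.sum_congr rfl fun l _ => ?_
              rw [norm_pow, hvabs j, one_pow]
          _ = (N:ℝ) := by simp
      rw [e1, e2]
      calc (N:ℝ)⁻¹ * c^(j+1) * ‖(∑ l ∈ Finset.range N, (v j)^l)‖
          ≤ (N:ℝ)⁻¹ * c^(j+1) * (N:ℝ) := by
            refine mul_le_mul_of_nonneg_left e3 (by positivity)
        _ = c^(j+1) := by field_simp
    -- split off the k-th coefficient
    set d : ℕ → ℂ := fun j => if j = k then 0 else coef j with hd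
    have hd_abs : ∀ j : ℕ, ‖(d j)‖ ≤ c^(j+1) := by
      intro j
      rw [hd]
      by_cases hjk : j = k
      · simp [hjk]; positivity
      · simp only [if_neg hjk]; exact hcoef_abs j
    have hd_zero : ∀ j : ℕ, j < k + N → d j = 0 := by
      intro j hj
      rw [hd]
      by_cases hjk : j = k
      · simp [hjk]
      · simp only [if_neg hjk]; exact hcoef_zero j hjk hj
    have hsum_dy : Summable (fun j : ℕ => d j • y j) := by
      refine Summable.of_norm (hgeom.of_nonneg_of_le (fun j => norm_nonneg _) fun j => ?_)
      rw [norm_smul, mul_comm]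
      exact mul_le_mul (hB j) (hd_abs j) (norm_nonneg _) hB0
    have hsum_cy : Summable (fun j : ℕ => coef j • y j) := by
      refine Summable.of_norm (hgeom.of_nonneg_of_le (fun j => norm_nonneg _) fun j => ?_)
      rw [norm_smul, mul_comm]
      exact mul_le_mul (hB j) (hcoef_abs j) (norm_nonneg _) hB0
    have hsum_ite : Summable (fun j : ℕ => if j = k then ((ρ:ℂ))⁻¹^(k+1) • y k else 0) := by
      apply summable_of_ne_finset_zero (s := {k})
      intro j hj
      simp only [Finset.mem_singleton] at hj
      rw [if_neg hj]
    have h_split : ∑' j : ℕ, coef j • y j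
        = (∑' j : ℕ, d j • y j) + ((ρ:ℂ))⁻¹^(k+1) • y k := by
      have e : ∀ j : ℕ, coef j • y j
          = d j • y j + (if j = k then ((ρ:ℂ))⁻¹^(k+1) • y k else 0) := by
        intro j
        by_cases hjk : j = k
        · subst hjk
          rw [hd]
          simp [hcoef_k]
        · rw [hd]
          simp [hjk]
      calc ∑' j : ℕ, coef j • y j
          = ∑' j : ℕ, (d j • y j + (if j = k then ((ρ:ℂ))⁻¹^(k+1) • y k else 0)) := by
            exact tsum_congr e
        _ = (∑' j : ℕ, d j • y j) + ∑' j : ℕ, (if j = k then ((ρ:ℂ))⁻¹^(k+1) • y k else 0) :=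
            hsum_dy.tsum_add hsum_ite
        _ = (∑' j : ℕ, d j • y j) + ((ρ:ℂ))⁻¹^(k+1) • y k := by
            rw [tsum_eq_single k (fun j hj => if_neg hj), if_pos rfl]
    -- norm of the average
    have hA_norm : ‖(N:ℂ)⁻¹ • ∑ l ∈ Finset.range N, (u^l)^(k+1) • S (u^l)‖ ≤ M * ‖x‖ := by
      rw [norm_smul]
      have e1 : ‖((N:ℂ))⁻¹‖ = (N:ℝ)⁻¹ := by
        rw [norm_inv]; norm_num
      have e2 : ‖∑ l ∈ Finset.range N, (u^l)^(k+1) • S (u^l)‖ ≤ (N:ℝ) * (M * ‖x‖) := by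
        calc ‖∑ l ∈ Finset.range N, (u^l)^(k+1) • S (u^l)‖
            ≤ ∑ l ∈ Finset.range N, ‖(u^l)^(k+1) • S (u^l)‖ := norm_sum_le _ _
          _ ≤ ∑ l ∈ Finset.range N, M * ‖x‖ := by
              refine Finset.sum_le_sum fun l _ => ?_
              rw [norm_smul, norm_pow, habs_ul l, one_pow, one_mul]
              exact hSbound _ (habs_ul l)
          _ = (N:ℝ) * (M * ‖x‖) := by
              rw [Finset.sum_const, Finset.card_range, nsmul_eq_mul]
      rw [e1]
      calc (N:ℝ)⁻¹ * ‖∑ l ∈ Finset.range N, (u^l)^(k+1) • S (u^l)‖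
          ≤ (N:ℝ)⁻¹ * ((N:ℝ) * (M * ‖x‖)) := by
            refine mul_le_mul_of_nonneg_left e2 (by positivity)
        _ = M * ‖x‖ := by field_simp
    -- norm of the remainder
    have hD_norm : ‖∑' j : ℕ, d j • y j‖ ≤ (B * c^(k+1) * (1-c)⁻¹) * c^N := by
      have hb : ∀ j : ℕ, ‖d j • y j‖ ≤ (if j < k + N then 0 else B * c^(j+1)) := by
        intro j
        by_cases hj : j < k + N
        · rw [if_pos hj, hd_zero j hj, zero_smul, norm_zero]
        · rw [if_neg hj, norm_smul, mul_comm]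
          exact mul_le_mul (hB j) (hd_abs j) (norm_nonneg _) hB0
      have hsb : Summable (fun j : ℕ => if j < k + N then (0:ℝ) else B * c^(j+1)) := by
        refine hgeom.of_nonneg_of_le (fun j => ?_) (fun j => ?_)
        · by_cases hj : j < k + N
          · rw [if_pos hj]
          · rw [if_neg hj]; positivity
        · by_cases hj : j < k + N
          · rw [if_pos hj]; positivity
          · rw [if_neg hj]
      have hnorms : Summable (fun j : ℕ => ‖d j • y j‖) :=
        hsb.of_nonneg_of_le (fun j => norm_nonneg _) hb
      have hre : ∑' j : ℕ, (if j < k + N then (0:ℝ) else B * c^(j+1))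
          = (B * c^(k+1) * (1-c)⁻¹) * c^N := by
        have hinj : Function.Injective (fun t : ℕ => k + N + t) := fun a b hab => by
          simp only [] at hab; omega
        have hsupp : Function.support
            (fun j : ℕ => if j < k + N then (0:ℝ) else B * c^(j+1))
            ⊆ Set.range (fun t : ℕ => k + N + t) := by
          intro j hj
          simp only [Function.mem_support] at hj
          by_cases hjlt : j < k + N
          · exact absurd (if_pos hjlt) hj
          · exact ⟨j - (k + N), by show k + N + (j - (k + N)) = j; omega⟩
        rw [← Function.Injective.tsum_eq hinj hsupp]
        have e : ∀ t : ℕ, (if k + N + t < k + N then (0:ℝ) else B * c^(k+N+t+1))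
            = (B * c^(k+1) * c^N) * c^t := by
          intro t
          rw [if_neg (by omega)]
          rw [show k+N+t+1 = (k+1) + N + t by omega, pow_add, pow_add]
          ring
        calc ∑' t : ℕ, (if k + N + t < k + N then (0:ℝ) else B * c^(k+N+t+1))
            = ∑' t : ℕ, (B * c^(k+1) * c^N) * c^t := tsum_congr e
          _ = (B * c^(k+1) * c^N) * (1-c)⁻¹ := by
              rw [tsum_mul_left, tsum_geometric_of_lt_one hc0.le hc1]
          _ = (B * c^(k+1) * (1-c)⁻¹) * c^N := by ring
      calc ‖∑' j : ℕ, d j • y j‖ ≤ ∑' j : ℕ, ‖d j • y j‖ :=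
            norm_tsum_le_tsum_norm hnorms
        _ ≤ ∑' j : ℕ, (if j < k + N then (0:ℝ) else B * c^(j+1)) :=
            Summable.tsum_le_tsum hb hnorms hsb
        _ = (B * c^(k+1) * (1-c)⁻¹) * c^N := hre
    -- put it together
    have hyk : ((ρ:ℂ))⁻¹^(k+1) • y k
        = ((N:ℂ)⁻¹ • ∑ l ∈ Finset.range N, (u^l)^(k+1) • S (u^l)) - ∑' j : ℕ, d j • y j := by
      rw [hA, h_split]
      abel
    have hnorm_yk : ‖((ρ:ℂ))⁻¹^(k+1) • y k‖ = c^(k+1) * ‖y k‖ := by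
      rw [norm_smul, norm_pow, norm_inv, Complex.norm_real, Real.norm_eq_abs,
        abs_of_pos hρ0, hc]
    calc c^(k+1) * ‖y k‖ = ‖((ρ:ℂ))⁻¹^(k+1) • y k‖ := hnorm_yk.symm
      _ ≤ ‖(N:ℂ)⁻¹ • ∑ l ∈ Finset.range N, (u^l)^(k+1) • S (u^l)‖
          + ‖∑' j : ℕ, d j • y j‖ := by
          rw [hyk]; exact norm_sub_le _ _
      _ ≤ M * ‖x‖ + (B * c^(k+1) * (1-c)⁻¹) * c^N := add_le_add hA_norm hD_norm
  -- pass to the limit in N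
  have hfin : c^(k+1) * ‖y k‖ ≤ M * ‖x‖ := by
    have htends : Filter.Tendsto
        (fun N : ℕ => M * ‖x‖ + (B * c^(k+1) * (1-c)⁻¹) * c^N) atTop
        (nhds (M * ‖x‖ + (B * c^(k+1) * (1-c)⁻¹) * 0)) :=
      tendsto_const_nhds.add
        ((tendsto_pow_atTop_nhds_zero_of_lt_one hc0.le hc1).const_mul _)
    rw [mul_zero, add_zero] at htends
    exact ge_of_tendsto htends
      (Filter.eventually_atTop.mpr ⟨k+1, fun N hN => hmain N (by omega)⟩)
  -- conclude
  have hpow : (0:ℝ) < ρ^(k+1) := pow_pos hρ0 _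
  have : (ρ^(k+1))⁻¹ * ‖y k‖ ≤ M * ‖x‖ := by
    rw [← inv_pow, ← hc]
    exact hfin
  calc ‖y k‖ = ρ^(k+1) * ((ρ^(k+1))⁻¹ * ‖y k‖) := by field_simp
    _ ≤ ρ^(k+1) * (M * ‖x‖) := mul_le_mul_of_nonneg_left this hpow.le
    _ = M * ρ^(k+1) * ‖x‖ := by ring

/-- If `T` satisfies the SDCC with constant `r > 1`, then for every `1 ≤ r₀ ≤ r` the
spectrum of `T` meets the circle of radius `r₀`. -/
theorem SDCC_spectrum_meets_circles
    {X : Type*} [NormedAddCommGroup X] [NormedSpace ℂ X] [CompleteSpace X]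
    (T : X →L[ℂ] X) (r : ℝ) (hr : 1 < r) (h : SDCCriterion T r)
    (r₀ : ℝ) (h₁ : 1 ≤ r₀) (h₂ : r₀ ≤ r) :
    ∃ lam ∈ spectrum ℂ T, ‖lam‖ = r₀ := by
  by_contra hcon
  push_neg at hcon
  -- sphere of radius r₀ is in the resolvent set
  have hsub : Metric.sphere (0:ℂ) r₀ ⊆ resolventSet ℂ T := by
    intro lam hlam
    rw [Metric.mem_sphere, Complex.dist_eq, sub_zero] at hlam
    by_contra hmem
    have : lam ∈ spectrum ℂ T := hmem
    exact hcon lam this hlam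
  obtain ⟨δ, hδ0, hthick⟩ := (isCompact_sphere (0:ℂ) r₀).exists_thickening_subset_open
    (spectrum.isOpen_resolventSet T) hsub
  -- pick a radius ρ with 1 < ρ < r and |ρ - r₀| < δ
  set a : ℝ := max 1 (r₀ - δ) with ha
  set b : ℝ := min r (r₀ + δ) with hb
  have hab : a < b := by
    rw [ha, hb, lt_min_iff, max_lt_iff, max_lt_iff]
    constructor
    · constructor <;> linarith
    · constructor <;> linarith
  set ρ : ℝ := (a + b) / 2 with hρdef
  have haρ : a < ρ := by rw [hρdef]; linarith
  have hρb : ρ < b := by rw [hρdef]; linarith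
  have hρ1 : 1 < ρ := lt_of_le_of_lt (le_max_left 1 (r₀ - δ)) haρ
  have hρr : ρ < r := lt_of_lt_of_le hρb (min_le_left _ _)
  have hρ0 : (0:ℝ) < ρ := lt_trans one_pos hρ1
  have hρδ : |ρ - r₀| < δ := by
    rw [abs_lt]
    constructor
    · have := lt_of_le_of_lt (le_max_right 1 (r₀ - δ)) haρ; linarith
    · have := lt_of_lt_of_le hρb (min_le_right r (r₀ + δ)); linarith
  -- the sphere of radius ρ is in the resolvent set
  have hres : ∀ lam : ℂ, ‖lam‖ = ρ → lam ∈ resolventSet ℂ T := by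
    intro lam hlam
    apply hthick
    rw [Metric.mem_thickening_iff]
    refine ⟨((r₀/ρ : ℝ) : ℂ) * lam, ?_, ?_⟩
    · rw [Metric.mem_sphere, Complex.dist_eq, sub_zero, norm_mul, hlam, Complex.norm_real, Real.norm_eq_abs,
        abs_of_pos (by positivity)]
      field_simp
    · rw [Complex.dist_eq]
      have e : lam - ((r₀/ρ : ℝ) : ℂ) * lam = ((1 - r₀/ρ : ℝ) : ℂ) * lam := by
        push_cast; ring
      rw [e, norm_mul, hlam, Complex.norm_real, Real.norm_eq_abs]
      have e2 : |1 - r₀/ρ| * ρ = |ρ - r₀| := by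
        rw [show (1 - r₀/ρ) = (ρ - r₀)/ρ by field_simp, abs_div, abs_of_pos hρ0,
          div_mul_cancel₀ _ (ne_of_gt hρ0)]
      rw [e2]
      exact hρδ
  -- bound on the resolvent over the sphere of radius ρ
  obtain ⟨lam₀, hlam₀, hM⟩ : ∃ lam₀ ∈ Metric.sphere (0:ℂ) ρ,
      ∀ lam ∈ Metric.sphere (0:ℂ) ρ, ‖resolvent T lam‖ ≤ ‖resolvent T lam₀‖ := by
    have hmax := (isCompact_sphere (0:ℂ) ρ).exists_isMaxOn
      (NormedSpace.sphere_nonempty.mpr hρ0.le) (f := fun lam => ‖resolvent T lam‖) ?_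
    · obtain ⟨lam₀, h1, h2⟩ := hmax
      exact ⟨lam₀, h1, fun lam hlam => h2 hlam⟩
    intro lam hlam
    rw [Metric.mem_sphere, Complex.dist_eq, sub_zero] at hlam
    exact (((spectrum.hasDerivAt_resolvent (hres lam hlam)).differentiableAt).continuousAt.norm).continuousWithinAt
  set M : ℝ := ‖resolvent T lam₀‖ with hMdef
  have hMb : ∀ lam : ℂ, ‖lam‖ = ρ → ‖resolvent T lam‖ ≤ M := by
    intro lam hlam
    exact hM lam (by rw [Metric.mem_sphere, Complex.dist_eq, sub_zero]; exact hlam)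
  have hM0 : 0 ≤ M := le_trans (norm_nonneg _) (hMb lam₀ (by
    have := hlam₀; rw [Metric.mem_sphere, Complex.dist_eq, sub_zero] at this; exact this))
  -- pick m with (r/ρ)^m > M * ρ
  obtain ⟨n, hn⟩ := pow_unbounded_of_one_lt (M * ρ) (show (1:ℝ) < r/ρ from (one_lt_div hρ0).mpr hρr)
  set m : ℕ := n + 1 with hm
  have hmge : M * ρ < (r/ρ)^m := by
    refine lt_of_lt_of_le hn ?_
    refine pow_le_pow_right₀ ?_ (by omega)
    exact le_of_lt ((one_lt_div hρ0).mpr hρr)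
  -- get the SDCC vector for m
  obtain ⟨x, hx0, hxto, hxlow⟩ := h m
  have hub := key_estimate T ρ M hρ1 hres hMb x hxto m
  have hlb := hxlow m (by omega) (le_refl m)
  have hxpos : 0 < ‖x‖ := norm_pos_iff.mpr hx0
  have hcontr : r^m ≤ M * ρ^(m+1) := by
    have := le_trans hlb hub
    have h' := (mul_le_mul_iff_of_pos_right hxpos).mp this
    exact h'
  have : (r/ρ)^m ≤ M * ρ := by
    rw [div_pow, div_le_iff₀ (pow_pos hρ0 m)]
    calc r^m ≤ M * ρ^(m+1) := hcontr
      _ = M * ρ * ρ^m := by ring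
  linarith
end

section
/- Let X be a Banach space and T : X → X a bounded linear operator. If T admits a distributionally irregular vector, then T is distributionally chaotic; moreover, the one-dimensional subspace spanned by a distributionally irregular vector is a distributionally ε-scrambled set for every ε > 0. -/
open Filter Topology
open scoped ENNReal

lemma densRatio_nonneg (A : Set ℕ) (n : ℕ) : 0 ≤ ((A ∩ Set.Icc 1 n).ncard : ℝ) / n := by
  positivity

lemma ncard_inter_Icc_le (A : Set ℕ) (n : ℕ) : (A ∩ Set.Icc 1 n).ncard ≤ n := by
  have h1 : (Set.Icc 1 n).ncard = n := by rw [Set.ncard_eq_toFinset_card']; simp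
  calc (A ∩ Set.Icc 1 n).ncard ≤ (Set.Icc 1 n).ncard :=
        Set.ncard_le_ncard Set.inter_subset_right (Set.finite_Icc 1 n)
    _ = n := h1

lemma densRatio_le_one (A : Set ℕ) (n : ℕ) : ((A ∩ Set.Icc 1 n).ncard : ℝ) / n ≤ 1 := by
  rcases Nat.eq_zero_or_pos n with h | h
  · simp [h]
  · rw [div_le_one (by exact_mod_cast h)]
    exact_mod_cast ncard_inter_Icc_le A n

lemma densRatio_bddLe (A : Set ℕ) :
    IsBoundedUnder (· ≤ ·) atTop (fun n : ℕ => ((A ∩ Set.Icc 1 n).ncard : ℝ) / n) :=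
  isBoundedUnder_of ⟨1, fun n => densRatio_le_one A n⟩

lemma densRatio_bddGe (A : Set ℕ) :
    IsBoundedUnder (· ≥ ·) atTop (fun n : ℕ => ((A ∩ Set.Icc 1 n).ncard : ℝ) / n) :=
  isBoundedUnder_of ⟨0, fun n => densRatio_nonneg A n⟩

lemma upperDensity_eq_one_of {A B : Set ℕ} (c : ℕ) (hA : upperDensity A = 1)
    (h : ∀ n, 1 ≤ n → ((A ∩ Set.Icc 1 n).ncard : ℝ) ≤ (B ∩ Set.Icc 1 n).ncard + c) :
    upperDensity B = 1 := by
  refine le_antisymm ?_ ?_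
  · exact limsup_le_of_le ((densRatio_bddGe B).isCoboundedUnder_flip)
      (Eventually.of_forall fun n => densRatio_le_one B n)
  · refine le_of_forall_pos_le_add fun δ hδ => ?_
    rw [← sub_le_iff_le_add]
    refine le_limsup_of_frequently_le ?_ (densRatio_bddLe B)
    have h1 : (1 : ℝ) - δ/2 < upperDensity A := by rw [hA]; linarith
    have h2 := frequently_lt_of_lt_limsup ((densRatio_bddGe A).isCoboundedUnder_flip) h1
    have h3 : ∀ᶠ n : ℕ in atTop, 1 ≤ n ∧ (c : ℝ) / n < δ/2 := by
      refine (eventually_ge_atTop 1).and ?_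
      exact (tendsto_const_div_atTop_nhds_zero_nat (c : ℝ)).eventually_lt_const (by linarith)
    refine (h2.and_eventually h3).mono ?_
    rintro n ⟨hn1, hn2, hn3⟩
    have hn : (0:ℝ) < n := by exact_mod_cast hn2
    have := h n hn2
    have h4 : ((A ∩ Set.Icc 1 n).ncard : ℝ) / n ≤ ((B ∩ Set.Icc 1 n).ncard : ℝ) / n + c / n := by
      rw [← add_div]; exact div_le_div_of_nonneg_right this hn.le
    linarith

lemma partition_count (S : Set ℕ) (n : ℕ) :
    (S ∩ Set.Icc 1 n).ncard + (Sᶜ ∩ Set.Icc 1 n).ncard = n := by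
  have h1 : (S ∩ Set.Icc 1 n) ∪ (Sᶜ ∩ Set.Icc 1 n) = Set.Icc 1 n := by
    rw [← Set.union_inter_distrib_right, Set.union_compl_self, Set.univ_inter]
  have h2 : Disjoint (S ∩ Set.Icc 1 n) (Sᶜ ∩ Set.Icc 1 n) :=
    Disjoint.mono Set.inter_subset_left Set.inter_subset_left disjoint_compl_right
  have h3 := Set.ncard_union_eq h2 ((Set.finite_Icc 1 n).subset Set.inter_subset_right)
    ((Set.finite_Icc 1 n).subset Set.inter_subset_right)
  rw [h1] at h3
  rw [← h3, Set.ncard_eq_toFinset_card']; simp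

lemma lowerDensity_eq_zero {S : Set ℕ} (h : upperDensity Sᶜ = 1) : lowerDensity S = 0 := by
  refine le_antisymm ?_ ?_
  · refine le_of_forall_pos_le_add fun δ hδ => ?_
    rw [zero_add]
    refine liminf_le_of_frequently_le ?_ (densRatio_bddGe S)
    have h1 : (1 : ℝ) - δ < upperDensity Sᶜ := by rw [h]; linarith
    have h2 := frequently_lt_of_lt_limsup ((densRatio_bddGe Sᶜ).isCoboundedUnder_flip) h1
    refine (h2.and_eventually (eventually_ge_atTop 1)).mono ?_
    rintro n ⟨hn1, hn2⟩
    have hn : (0:ℝ) < n := by exact_mod_cast hn2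
    have hp := partition_count S n
    have hp' : ((S ∩ Set.Icc 1 n).ncard : ℝ) + ((Sᶜ ∩ Set.Icc 1 n).ncard : ℝ) = n := by
      exact_mod_cast hp
    have : ((S ∩ Set.Icc 1 n).ncard : ℝ) / n = 1 - ((Sᶜ ∩ Set.Icc 1 n).ncard : ℝ) / n := by
      field_simp; linarith
    rw [this]; linarith
  · exact le_liminf_of_le ((densRatio_bddLe S).isCoboundedUnder_flip)
      (Eventually.of_forall fun n => densRatio_nonneg S n)

lemma upperDensity_eq_one_of_tail {a : ℕ → ℕ} (ha : Function.Injective a)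
    (hA : upperDensity (Set.range a) = 1) {S : Set ℕ} (k0 : ℕ)
    (h : ∀ k, k0 ≤ k → a k ∈ S) : upperDensity S = 1 := by
  refine upperDensity_eq_one_of k0 hA fun n hn => ?_
  have hsub : Set.range a ∩ Set.Icc 1 n ⊆ (S ∩ Set.Icc 1 n) ∪ (a '' Set.Iio k0) := by
    rintro m ⟨⟨k, rfl⟩, hm⟩
    rcases lt_or_ge k k0 with hk | hk
    · exact Or.inr ⟨k, hk, rfl⟩
    · exact Or.inl ⟨h k hk, hm⟩
  have hfin : ((S ∩ Set.Icc 1 n) ∪ (a '' Set.Iio k0)).Finite :=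
    (((Set.finite_Icc 1 n).subset Set.inter_subset_right)).union
      ((Set.finite_Iio k0).image a)
  have h1 : (Set.range a ∩ Set.Icc 1 n).ncard ≤ (S ∩ Set.Icc 1 n).ncard + k0 := by
    calc (Set.range a ∩ Set.Icc 1 n).ncard
        ≤ ((S ∩ Set.Icc 1 n) ∪ (a '' Set.Iio k0)).ncard := Set.ncard_le_ncard hsub hfin
      _ ≤ (S ∩ Set.Icc 1 n).ncard + (a '' Set.Iio k0).ncard := Set.ncard_union_le _ _
      _ ≤ (S ∩ Set.Icc 1 n).ncard + k0 := by
          gcongr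
          calc (a '' Set.Iio k0).ncard ≤ (Set.Iio k0).ncard :=
                Set.ncard_image_le (Set.finite_Iio k0)
            _ = k0 := by rw [Set.ncard_eq_toFinset_card']; simp
  exact_mod_cast h1

/-- If `T` admits a distributionally irregular vector `x`, then `T` is distributionally
chaotic; moreover `span {x}` is a distributionally `ε`-scrambled set for every `ε > 0`. -/

theorem distChaotic_of_distIrregularVector
    {𝕜 : Type*} [RCLike 𝕜] {X : Type*} [NormedAddCommGroup X] [NormedSpace 𝕜 X]
    [CompleteSpace X] (T : X →L[𝕜] X) (x : X) (hx : DistIrregularVector T x) :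
    DistChaotic T ∧
    ∀ ε > (0:ℝ), DistScrambled T ((Submodule.span 𝕜 {x} : Submodule 𝕜 X) : Set X) ε := by
  obtain ⟨a, b, ha, hb, hapos, hbpos, hua, hub, h0, hinf⟩ := hx
  have hxne : x ≠ 0 := by
    rintro rfl
    obtain ⟨k, hk⟩ := (hinf.eventually (eventually_ge_atTop 1)).exists
    simp at hk; linarith
  have key : ∀ ε > (0:ℝ), DistScrambled T ((Submodule.span 𝕜 {x} : Submodule 𝕜 X) : Set X) ε := by
    intro ε hε u hu v hv huv
    obtain ⟨c, rfl⟩ := Submodule.mem_span_singleton.mp hu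
    obtain ⟨d, rfl⟩ := Submodule.mem_span_singleton.mp hv
    have hcd : c - d ≠ 0 := sub_ne_zero.mpr fun h => huv (by rw [h])
    have hnrm : (0:ℝ) < ‖c - d‖ := norm_pos_iff.mpr hcd
    have hkey : ∀ n : ℕ, ‖(T ^ n) (c • x) - (T ^ n) (d • x)‖ = ‖c - d‖ * ‖(T ^ n) x‖ := by
      intro n
      rw [← map_sub, ← sub_smul, map_smul, norm_smul]
    constructor
    · apply lowerDensity_eq_zero
      have hev : ∀ᶠ k in Filter.atTop, ε / ‖c - d‖ ≤ ‖(T ^ (b k)) x‖ :=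
        hinf.eventually (eventually_ge_atTop _)
      obtain ⟨k0, hk0⟩ := eventually_atTop.mp hev
      refine upperDensity_eq_one_of_tail hb.injective hub k0 fun k hk => ?_
      simp only [Set.mem_compl_iff, Set.mem_setOf_eq, not_lt, hkey]
      have := hk0 k hk
      rw [div_le_iff₀ hnrm] at this
      linarith
    · intro τ hτ
      have hev : ∀ᶠ k in Filter.atTop, ‖(T ^ (a k)) x‖ < τ / ‖c - d‖ :=
        h0.eventually_lt_const (by positivity)
      obtain ⟨k0, hk0⟩ := eventually_atTop.mp hev
      refine upperDensity_eq_one_of_tail ha.injective hua k0 fun k hk => ?_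
      simp only [Set.mem_setOf_eq, hkey]
      have := hk0 k hk
      rw [lt_div_iff₀ hnrm] at this
      linarith
  refine ⟨⟨_, 1, one_pos, ?_, key 1 one_pos⟩, key⟩
  intro hcount
  set f : ℝ → X := fun r => (algebraMap ℝ 𝕜 r) • x with hf
  have hinj : Function.Injective f := by
    intro r s hrs
    have h1 : (algebraMap ℝ 𝕜 r - algebraMap ℝ 𝕜 s) • x = 0 := by
      rw [sub_smul, sub_eq_zero]; exact hrs
    rcases smul_eq_zero.mp h1 with h2 | h2
    · exact (algebraMap ℝ 𝕜).injective (sub_eq_zero.mp h2)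
    · exact absurd h2 hxne
  have hsub : Set.range f ⊆ ((Submodule.span 𝕜 {x} : Submodule 𝕜 X) : Set X) := by
    rintro _ ⟨r, rfl⟩
    exact Submodule.mem_span_singleton.mpr ⟨algebraMap ℝ 𝕜 r, rfl⟩
  have hc : (Set.range f).Countable := hcount.mono hsub
  have := hc.to_subtype
  have : Countable ℝ := (Equiv.ofInjective f hinj).countable_iff.mpr this
  exact Cardinal.not_countable_real Set.countable_univ
end

section
/- Let X be a Banach space and T : X → X a bounded linear operator. The following are equivalent: (i) for every sequence of positive numbers (C_m) increasing to ∞ there exists a sequence (x_m) in X \ {0} with lim_{n→∞} T^n x_m = 0 for every m and a sequence of positive integers (N_m) increasing to ∞ such that lim_m (1/N_m)·card{0 ≤ i < N_m : ‖T^i x_m‖ ≥ C_m ‖x_m‖} = 1; (ii) T satisfies the Distributional Chaos Criterion. -/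
open Filter Topology
open scoped ENNReal

section Helpers
variable {𝕜 : Type*} [RCLike 𝕜] {X : Type*} [NormedAddCommGroup X] [NormedSpace 𝕜 X]

lemma pow_apply_norm_le' (T : X →L[𝕜] X) (i : ℕ) (w : X) :
    ‖(T^i) w‖ ≤ (max 1 ‖T‖)^i * ‖w‖ := by
  induction i with
  | zero => simp
  | succ n ih =>
    have h : (T^(n+1)) w = T ((T^n) w) := by rw [pow_succ']; rfl
    rw [h]
    calc ‖T ((T^n) w)‖ ≤ ‖T‖ * ‖(T^n) w‖ := T.le_opNorm _
    _ ≤ (max 1 ‖T‖) * ((max 1 ‖T‖)^n * ‖w‖) := by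
        apply mul_le_mul (le_max_right _ _) ih (norm_nonneg _)
        exact le_trans zero_le_one (le_max_left _ _)
    _ = (max 1 ‖T‖)^(n+1) * ‖w‖ := by ring

lemma pow_apply_norm_le (T : X →L[𝕜] X) {N i : ℕ} (hi : i ≤ N) (w : X) :
    ‖(T^i) w‖ ≤ (max 1 ‖T‖)^N * ‖w‖ := by
  refine (pow_apply_norm_le' T i w).trans ?_
  have : ((1:ℝ) ⊔ ‖T‖)^i ≤ (1 ⊔ ‖T‖)^N := pow_le_pow_right₀ (le_max_left _ _) hi
  exact mul_le_mul_of_nonneg_right this (norm_nonneg w)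

lemma span_tendsto (T : X →L[𝕜] X) (x : ℕ → X)
    (h : ∀ m, Filter.Tendsto (fun n : ℕ => (T^n) (x m)) Filter.atTop (nhds 0)) :
    ∀ z ∈ Submodule.span 𝕜 (Set.range x),
      Filter.Tendsto (fun n : ℕ => (T^n) z) Filter.atTop (nhds 0) := by
  intro z hz
  induction hz using Submodule.span_induction with
  | mem v hv => obtain ⟨m, rfl⟩ := hv; exact h m
  | zero => simpa using tendsto_const_nhds
  | add a b _ _ ha hb => simpa using ha.add hb
  | smul c a _ ha => simpa using ha.const_smul c

end Helpers

lemma countSet_finite (N : ℕ) (P : ℕ → Prop) : {i : ℕ | i < N ∧ P i}.Finite :=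
  (Set.finite_Iio N).subset fun _ hi => hi.1

lemma ncard_Iio' (N : ℕ) : (Set.Iio N).ncard = N := by
  rw [← Finset.coe_range, Set.ncard_coe_finset]; simp

lemma ratio_le_one (N : ℕ) (P : ℕ → Prop) :
    (({i : ℕ | i < N ∧ P i}).ncard : ℝ) / N ≤ 1 := by
  rcases Nat.eq_zero_or_pos N with h | h
  · simp [h]
  · rw [div_le_one (by exact_mod_cast h)]
    have hs : {i : ℕ | i < N ∧ P i} ⊆ Set.Iio N := fun i hi => hi.1
    exact_mod_cast (Set.ncard_le_ncard hs (Set.finite_Iio N)).trans_eq (ncard_Iio' N)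

/-- The criterion of Cao, Cui and Hou is equivalent to the Distributional Chaos Criterion. -/
theorem CCH_criterion_iff_DCC
    {𝕜 : Type*} [RCLike 𝕜] {X : Type*} [NormedAddCommGroup X] [NormedSpace 𝕜 X]
    [CompleteSpace X] (T : X →L[𝕜] X) :
    (∀ C : ℕ → ℝ, (∀ m, 0 < C m) → Monotone C →
        Filter.Tendsto C Filter.atTop Filter.atTop →
      ∃ x : ℕ → X, (∀ m, x m ≠ 0) ∧
        (∀ m, Filter.Tendsto (fun n : ℕ => (T ^ n) (x m)) Filter.atTop (nhds 0)) ∧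
        ∃ N : ℕ → ℕ, (∀ m, 0 < N m) ∧ Monotone N ∧
          Filter.Tendsto N Filter.atTop Filter.atTop ∧
          Filter.Tendsto (fun m : ℕ =>
              (({i : ℕ | i < N m ∧ C m * ‖x m‖ ≤ ‖(T ^ i) (x m)‖}).ncard : ℝ) / N m)
            Filter.atTop (nhds 1)) ↔
    DCCriterion T := by
  constructor
  · intro h
    obtain ⟨x, hx0, hxT, N, hN0, hNmono, hNtop, hlim⟩ :=
      h (fun m => (m : ℝ) + 1) (fun m => by positivity)
        (fun a b hab => by simpa using (Nat.cast_le (α := ℝ)).mpr hab)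
        (tendsto_atTop_add_const_right _ 1 tendsto_natCast_atTop_atTop)
    refine ⟨x, x, N, hx0, hx0,
      (fun m => subset_closure (Submodule.subset_span ⟨m, rfl⟩)), hxT, hN0, hNmono, hNtop, ?_⟩
    apply tendsto_of_tendsto_of_tendsto_of_le_of_le hlim tendsto_const_nhds
    · intro m
      have hsub : {i : ℕ | i < N m ∧ ((m : ℝ) + 1) * ‖x m‖ ≤ ‖(T ^ i) (x m)‖} ⊆
          {i : ℕ | i < N m ∧ (m : ℝ) * ‖x m‖ ≤ ‖(T ^ i) (x m)‖} := by
        rintro i ⟨h1, h2⟩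
        exact ⟨h1, le_trans (mul_le_mul_of_nonneg_right (by linarith) (norm_nonneg _)) h2⟩
      have hpos : (0 : ℝ) < N m := by exact_mod_cast hN0 m
      have hcard := Set.ncard_le_ncard hsub (countSet_finite (N m) _)
      apply div_le_div_of_nonneg_right ?_ hpos.le
      exact_mod_cast hcard
    · intro m; exact ratio_le_one (N m) _
  · intro h C hC0 hCmono hCtop
    obtain ⟨x, y, N, hx0, hy0, hyc, hxT, hN0, hNmono, hNtop, hlim⟩ := h
    set k : ℕ → ℕ := fun m => max (m + 1) (⌈2 * C m⌉₊ + 1) with hk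
    have hk_mono : Monotone k := fun a b hab =>
      max_le_max (by omega) (by
        have h1 := Nat.ceil_le_ceil (R := ℝ) (by linarith [hCmono hab] : 2 * C a ≤ 2 * C b)
        omega)
    have hk_top : Filter.Tendsto k Filter.atTop Filter.atTop :=
      tendsto_atTop_mono (fun m => (Nat.le_succ m).trans (le_max_left (m + 1) _)) tendsto_id
    have hkC : ∀ m, 2 * C m + 1 ≤ (k m : ℝ) := by
      intro m
      have h1 : ⌈2 * C m⌉₊ + 1 ≤ k m := le_max_right _ _
      have h2 : 2 * C m ≤ (⌈2 * C m⌉₊ : ℝ) := Nat.le_ceil _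
      have h3 : ((⌈2 * C m⌉₊ : ℕ) : ℝ) + 1 ≤ (k m : ℝ) := by exact_mod_cast h1
      linarith
    have key : ∀ m : ℕ, ∃ z : X, z ≠ 0 ∧
        Filter.Tendsto (fun n : ℕ => (T ^ n) z) Filter.atTop (nhds 0) ∧
        ∀ i, i < N (k m) → (k m : ℝ) * ‖y (k m)‖ ≤ ‖(T ^ i) (y (k m))‖ →
          C m * ‖z‖ ≤ ‖(T ^ i) z‖ := by
      intro m
      set Y := y (k m) with hY
      have hYpos : 0 < ‖Y‖ := norm_pos_iff.mpr (hy0 (k m))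
      set B := (max 1 ‖T‖) ^ (N (k m)) with hB
      have hB1 : (1 : ℝ) ≤ B := one_le_pow₀ (le_max_left _ _)
      have hB0 : (0 : ℝ) < B := lt_of_lt_of_le one_pos hB1
      set δ := ‖Y‖ / (2 * B) with hδdef
      have hδ : 0 < δ := by positivity
      obtain ⟨z, hzmem, hdz⟩ := Metric.mem_closure_iff.mp (hyc (k m)) δ hδ
      have hzY : ‖Y - z‖ < δ := by rwa [dist_eq_norm] at hdz
      have hδhalf : δ ≤ ‖Y‖ / 2 := by
        rw [hδdef, div_le_div_iff₀ (by positivity) two_pos]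
        nlinarith
      have hlo : ‖Y‖ / 2 < ‖z‖ := by
        have := norm_sub_norm_le Y z
        linarith
      have hhi : ‖z‖ ≤ 2 * ‖Y‖ := by
        have h1 : ‖z‖ - ‖Y‖ ≤ ‖z - Y‖ := norm_sub_norm_le z Y
        rw [norm_sub_rev] at h1
        linarith
      refine ⟨z, norm_pos_iff.mp (by linarith), span_tendsto T x hxT z hzmem, ?_⟩
      intro i hiN hgood
      have hTi : ‖(T ^ i) (Y - z)‖ ≤ B * ‖Y - z‖ := pow_apply_norm_le T hiN.le _
      have hTi2 : ‖(T ^ i) Y - (T ^ i) z‖ ≤ ‖Y‖ / 2 := by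
        have h1 : B * ‖Y - z‖ ≤ B * δ := mul_le_mul_of_nonneg_left hzY.le hB0.le
        have h2 : B * δ = ‖Y‖ / 2 := by rw [hδdef]; field_simp
        have h3 : (T ^ i) (Y - z) = (T ^ i) Y - (T ^ i) z := map_sub _ _ _
        rw [← h3]; linarith
      have h4 : ‖(T ^ i) Y‖ - ‖(T ^ i) z‖ ≤ ‖(T ^ i) Y - (T ^ i) z‖ :=
        norm_sub_norm_le _ _
      have h5 := hkC m
      have h6 := (hC0 m).le
      nlinarith [mul_le_mul_of_nonneg_left hhi h6]
    choose z hz0 hzT hzP using key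
    refine ⟨z, hz0, hzT, fun m => N (k m), fun m => hN0 _, hNmono.comp hk_mono,
      hNtop.comp hk_top, ?_⟩
    apply tendsto_of_tendsto_of_tendsto_of_le_of_le (hlim.comp hk_top) tendsto_const_nhds
    · intro m
      simp only [Function.comp_apply]
      have hsub : {i : ℕ | i < N (k m) ∧ ((k m : ℝ)) * ‖y (k m)‖ ≤ ‖(T ^ i) (y (k m))‖} ⊆
          {i : ℕ | i < N (k m) ∧ C m * ‖z m‖ ≤ ‖(T ^ i) (z m)‖} := by
        rintro i ⟨h1, h2⟩
        exact ⟨h1, hzP m i h1 h2⟩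
      have hpos : (0 : ℝ) < N (k m) := by exact_mod_cast hN0 (k m)
      have hcard := Set.ncard_le_ncard hsub (countSet_finite (N (k m)) _)
      apply div_le_div_of_nonneg_right ?_ hpos.le
      exact_mod_cast hcard
    · intro m; exact ratio_le_one (N (k m)) _
end
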